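/- arXiv:2108.00592 — 10 statements merged into one kernel-verified Lean document; each statement's English description precedes it below -/
import Mathlib

section
/- Let G and H be simple graphs on n vertices with det W(G) ≠ 0. Then H is generalized cospectral with G (i.e., G and H are cospectral and their complements are cospectral) if and only if there exists a unique regular rational orthogonal matrix Q such that Q^T A(G) Q = A(H). -/
open Matrix Polynomial
open scoped Classical

noncomputable section

/-- The adjacency matrix of a simple graph on `Fin n`, with integer entries. -/
def adjMat (n : ℕ) (G : SimpleGraph (Fin n)) : Matrix (Fin n) (Fin n) ℤ :=
  Matrix.of fun i j => if G.Adj i j then 1 else 0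

/-- The walk matrix `W = [e, Ae, ..., A^{n-1}e]` of a matrix `A`. -/
def walkMat {n : ℕ} (A : Matrix (Fin n) (Fin n) ℤ) : Matrix (Fin n) (Fin n) ℤ :=
  Matrix.of fun i j => ((A ^ (j : ℕ)) *ᵥ fun _ => (1 : ℤ)) i

/-- Two graphs are generalized cospectral if they are cospectral and so are their complements. -/
def genCospectral {n : ℕ} (G H : SimpleGraph (Fin n)) : Prop :=
  (adjMat n G).charpoly = (adjMat n H).charpoly ∧
  (adjMat n Gᶜ).charpoly = (adjMat n Hᶜ).charpoly

namespace JN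

variable {n : ℕ}

abbrev Mat (n : ℕ) := Matrix (Fin n) (Fin n) ℚ

def wmQ (A : Mat n) : Mat n := Matrix.of fun i j => ((A ^ (j : ℕ)) *ᵥ fun _ => (1:ℚ)) i

def mom (A : Mat n) (k : ℕ) : ℚ := ∑ i, ∑ j, (A ^ k) i j

def qpol (A : Mat n) : ℚ[X] := ∑ i, ∑ j, (charmatrix A).adjugate i j

def Smat (A : Mat n) (k : ℕ) : Mat n :=
  ∑ i ∈ Finset.range (n - k), (A.charpoly.coeff (i + k + 1)) • A ^ i

lemma charpoly_natDegree (A : Mat n) : A.charpoly.natDegree = n := by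
  rw [Matrix.charpoly_natDegree_eq_dim, Fintype.card_fin]

lemma charpoly_coeff_top (A : Mat n) : A.charpoly.coeff n = 1 := by
  have := A.charpoly_monic
  rw [Monic, leadingCoeff, charpoly_natDegree] at this
  exact this

lemma ch_sum (A : Mat n) :
    ∑ m ∈ Finset.range (n + 1), A.charpoly.coeff m • A ^ m = 0 := by
  have h := A.aeval_self_charpoly
  rwa [Polynomial.aeval_eq_sum_range, charpoly_natDegree] at h

lemma telescope (A : Mat n) {k : ℕ} (hk : k + 1 ≤ n) :
    Smat A k - A * Smat A (k + 1) = A.charpoly.coeff (k + 1) • 1 := by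
  have h1 : n - k = (n - (k+1)) + 1 := by omega
  rw [Smat, Smat, h1, Finset.sum_range_succ', Finset.mul_sum]
  have h2 : ∀ i, A * (A.charpoly.coeff (i + (k+1) + 1) • A ^ i)
      = A.charpoly.coeff ((i+1) + k + 1) • A ^ (i+1) := by
    intro i
    rw [mul_smul_comm, ← pow_succ']
    congr 2
    omega
  simp only [h2]
  simp only [zero_add, pow_zero]
  abel

def Npoly (A : Mat n) : (Mat n)[X] := ∑ k ∈ Finset.range n, C (Smat A k) * X ^ k

lemma Smat_eq_zero (A : Mat n) {k : ℕ} (hk : n ≤ k) : Smat A k = 0 := by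
  rw [Smat]
  have : n - k = 0 := by omega
  rw [this]
  simp

lemma Npoly_coeff (A : Mat n) (m : ℕ) : (Npoly A).coeff m = Smat A m := by
  rw [Npoly, finset_sum_coeff]
  by_cases hm : m < n
  · rw [Finset.sum_eq_single m]
    · simp
    · intro k _ hk
      simp [coeff_C_mul, coeff_X_pow, Ne.symm hk]
    · intro h
      exact absurd (Finset.mem_range.mpr hm) h
  · rw [Smat_eq_zero A (by omega), Finset.sum_eq_zero]
    intro k hk
    have : m ≠ k := by simp at hk; omega
    simp [coeff_C_mul, coeff_X_pow, this]

lemma key_identity (A : Mat n) :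
    (X - C A) * Npoly A = (A.charpoly).map (algebraMap ℚ (Mat n)) := by
  ext m : 1
  rw [coeff_map, sub_mul, coeff_sub, coeff_C_mul, Npoly_coeff, Algebra.algebraMap_eq_smul_one]
  cases m with
  | zero =>
    rw [mul_coeff_zero, coeff_X_zero, zero_mul]
    have h := ch_sum A
    rw [Finset.sum_range_succ'] at h
    have hS : A * Smat A 0 = ∑ i ∈ Finset.range n, A.charpoly.coeff (i + 1) • A ^ (i + 1) := by
      rw [Smat, Nat.sub_zero, Finset.mul_sum]
      refine Finset.sum_congr rfl fun i _ => ?_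
      rw [mul_smul_comm, ← pow_succ']
    rw [hS]
    simp only [pow_zero] at h
    linear_combination (norm := abel) -h
  | succ m =>
    rw [coeff_X_mul, Npoly_coeff]
    by_cases hm : m + 1 ≤ n
    · exact telescope A hm
    · rw [Smat_eq_zero A (by omega), Smat_eq_zero A (by omega),
        coeff_eq_zero_of_natDegree_lt (by rw [charpoly_natDegree]; omega)]
      simp
lemma cancel {R : Type*} [CommRing R] [IsDomain R] {m : ℕ}
    {M X : Matrix (Fin m) (Fin m) R} (hd : M.det ≠ 0) (h : M * X = 0) : X = 0 := by
  have h2 : M.det • X = 0 := by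
    calc M.det • X = M.adjugate * (M * X) := by
          rw [← Matrix.mul_assoc, Matrix.adjugate_mul, Matrix.smul_mul, Matrix.one_mul]
      _ = 0 := by rw [h, Matrix.mul_zero]
  ext i j
  have := congrFun (congrFun h2 i) j
  simp only [Matrix.smul_apply, smul_eq_mul, Matrix.zero_apply] at this ⊢
  rcases mul_eq_zero.mp this with h' | h'
  · exact absurd h' hd
  · exact h'

lemma adjugate_charmatrix (A : Mat n) :
    (charmatrix A).adjugate = matPolyEquiv.symm (Npoly A) := by
  have hdet : (charmatrix A).det ≠ 0 := by
    rw [← Matrix.charpoly]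
    exact A.charpoly_monic.ne_zero
  refine sub_eq_zero.mp (cancel hdet ?_)
  rw [Matrix.mul_sub, Matrix.mul_adjugate, ← Matrix.charpoly, sub_eq_zero]
  apply matPolyEquiv.injective
  rw [_root_.map_mul, AlgEquiv.apply_symm_apply, matPolyEquiv_charmatrix, key_identity,
    matPolyEquiv_smul_one]

lemma qpol_coeff (A : Mat n) (k : ℕ) :
    (qpol A).coeff k = ∑ i ∈ Finset.range (n - k), A.charpoly.coeff (i + k + 1) * mom A i := by
  rw [qpol]
  simp only [adjugate_charmatrix, finset_sum_coeff]
  have : ∀ i j : Fin n, (matPolyEquiv.symm (Npoly A) i j).coeff k = Smat A k i j := by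
    intro i j
    rw [matPolyEquiv_symm_apply_coeff, Npoly_coeff]
  simp only [this]
  simp only [Smat, Matrix.sum_apply, Matrix.smul_apply, smul_eq_mul]
  have h2 : ∀ i : Fin n, ∑ j : Fin n, ∑ m ∈ Finset.range (n - k),
      A.charpoly.coeff (m + k + 1) * (A ^ m) i j
      = ∑ m ∈ Finset.range (n - k), ∑ j : Fin n,
        A.charpoly.coeff (m + k + 1) * (A ^ m) i j := fun i => Finset.sum_comm ..

  simp only [h2]
  rw [Finset.sum_comm]
  refine Finset.sum_congr rfl fun m _ => ?_
  rw [mom, Finset.mul_sum]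
  refine Finset.sum_congr rfl fun i _ => ?_
  rw [Finset.mul_sum]

lemma rowcol_entry {K : Type*} [CommRing K] {m : ℕ} (N : Matrix (Fin m) (Fin m) K)
    (u v : Fin m → K) :
    ∀ i j, (replicateRow (Fin 1) v * N * replicateCol (Fin 1) u) i j = v ⬝ᵥ (N *ᵥ u) := by
  intro i j
  simp only [Matrix.mul_apply, Matrix.replicateRow_apply, Matrix.replicateCol_apply, dotProduct, mulVec,
    Finset.sum_mul, Finset.mul_sum]
  rw [Finset.sum_comm]
  exact Finset.sum_congr rfl fun i _ => Finset.sum_congr rfl fun j _ => by ring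

lemma detLemma_field {K : Type*} [Field K] {m : ℕ} (M : Matrix (Fin m) (Fin m) K)
    (hM : M.det ≠ 0) (u v : Fin m → K) :
    (M + replicateCol (Fin 1) u * replicateRow (Fin 1) v).det = M.det + v ⬝ᵥ (M.adjugate *ᵥ u) := by
  have hM1 : M * (1 + replicateCol (Fin 1) (M⁻¹ *ᵥ u) * replicateRow (Fin 1) v)
      = M + replicateCol (Fin 1) u * replicateRow (Fin 1) v := by
    have hcol : M * replicateCol (Fin 1) (M⁻¹ *ᵥ u) = replicateCol (Fin 1) u := by
      ext i j
      simp only [Matrix.mul_apply, Matrix.replicateCol_apply]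
      have : ∑ k, M i k * (M⁻¹ *ᵥ u) k = (M *ᵥ (M⁻¹ *ᵥ u)) i := rfl
      rw [this, mulVec_mulVec, Matrix.mul_nonsing_inv M (isUnit_iff_ne_zero.mpr hM),
        one_mulVec]
    rw [Matrix.mul_add, Matrix.mul_one, ← Matrix.mul_assoc, hcol]
  rw [← hM1, det_mul, (show (1 + replicateCol (Fin 1) (M⁻¹ *ᵥ u) * replicateRow (Fin 1) v : Matrix (Fin m) (Fin m) K).det = 1 + v ⬝ᵥ (M⁻¹ *ᵥ u) by
      convert Matrix.det_one_add_replicateCol_mul_replicateRow (ι := Fin 1) (M⁻¹ *ᵥ u) v),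
    Matrix.inv_def, Ring.inverse_eq_inv', smul_mulVec, dotProduct_smul, smul_eq_mul]
  field_simp

lemma detLemma {R : Type*} [CommRing R] [IsDomain R] {m : ℕ} (M : Matrix (Fin m) (Fin m) R)
    (hM : M.det ≠ 0) (u v : Fin m → R) :
    (M + replicateCol (Fin 1) u * replicateRow (Fin 1) v).det = M.det + v ⬝ᵥ (M.adjugate *ᵥ u) := by
  set K := FractionRing R
  have hφ : Function.Injective (algebraMap R K) := IsFractionRing.injective R K
  set φ := algebraMap R K with hφdef
  apply hφ
  have hmapdet : ∀ N : Matrix (Fin m) (Fin m) R, φ N.det = (N.map φ).det := by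
    intro N
    rw [RingHom.map_det, RingHom.mapMatrix_apply]
  have hmap : (M + replicateCol (Fin 1) u * replicateRow (Fin 1) v).map φ
      = M.map φ + replicateCol (Fin 1) (φ ∘ u) * replicateRow (Fin 1) (φ ∘ v) := by
    ext i j
    simp [Matrix.map_apply, Matrix.add_apply, Matrix.mul_apply, map_add, _root_.map_mul]
  rw [hmapdet, hmap,
    detLemma_field (M.map φ) (by rw [← hmapdet]; exact fun h => hM (hφ (by simpa using h)))]
  rw [map_add, hmapdet]
  congr 1
  have hadj : (M.map φ).adjugate = M.adjugate.map φ := by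
    rw [← RingHom.mapMatrix_apply, ← RingHom.map_adjugate, RingHom.mapMatrix_apply]
  rw [hadj]
  simp [dotProduct, mulVec, map_sum, _root_.map_mul, Finset.mul_sum]

def sig : ℚ[X] →ₐ[ℚ] ℚ[X] := aeval (-1 - X)

lemma sig_sig (p : ℚ[X]) : sig (sig p) = p := by
  have h : (sig.comp sig : ℚ[X] →ₐ[ℚ] ℚ[X]) = AlgHom.id ℚ ℚ[X] := by
    apply Polynomial.algHom_ext
    simp [sig, map_sub, aeval_X]
  exact congrFun (congrArg DFunLike.coe h) p

lemma sig_inj : Function.Injective (sig : ℚ[X] → ℚ[X]) := by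
  intro p q h
  have := congrArg sig h
  rwa [sig_sig, sig_sig] at this

lemma charmatrix_compl (A : Mat n) :
    charmatrix ((Matrix.of fun _ _ => (1:ℚ)) - 1 - A)
      = -(((charmatrix A).map sig) + replicateCol (Fin 1) (fun _ => (1:ℚ[X])) * replicateRow (Fin 1) (fun _ => (1:ℚ[X]))) := by
  apply Matrix.ext
  intro i j
  by_cases hij : i = j
  · subst hij
    rw [charmatrix_apply_eq]
    simp only [Matrix.neg_apply, Matrix.add_apply, Matrix.map_apply, charmatrix_apply_eq,
      Matrix.mul_apply, Matrix.replicateCol_apply, Matrix.replicateRow_apply, Matrix.sub_apply,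
      Matrix.one_apply_eq, Matrix.of_apply, Finset.sum_const, Finset.card_univ,
      Fintype.card_fin, one_smul, mul_one]
    rw [sig]
    rw [map_sub (aeval (-1 - X) : ℚ[X] →ₐ[ℚ] ℚ[X]) X (C (A i i)), aeval_X, aeval_C]
    simp only [_root_.map_sub, _root_.map_one, Polynomial.algebraMap_eq]
    ring
  · rw [charmatrix_apply_ne _ _ _ hij]
    simp only [Matrix.neg_apply, Matrix.add_apply, Matrix.map_apply,
      charmatrix_apply_ne _ _ _ hij, Matrix.mul_apply, Matrix.replicateCol_apply, Matrix.replicateRow_apply,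
      Matrix.sub_apply, Matrix.one_apply_ne hij, Matrix.of_apply, Finset.sum_const,
      Finset.card_univ, Fintype.card_fin, one_smul, mul_one]
    rw [sig, map_neg (aeval (-1 - X) : ℚ[X] →ₐ[ℚ] ℚ[X]) (C (A i j)), aeval_C]
    simp only [_root_.map_sub, _root_.map_one, _root_.map_zero, Polynomial.algebraMap_eq]
    ring
lemma det_charmatrix_map_sig (A : Mat n) :
    ((charmatrix A).map sig).det = sig A.charpoly := by
  rw [show ((charmatrix A).map sig) = (sig : ℚ[X] →+* ℚ[X]).mapMatrix (charmatrix A) from rfl,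
    ← RingHom.map_det]
  rfl

lemma compl_charpoly (A : Mat n) :
    ((Matrix.of fun _ _ => (1:ℚ)) - 1 - A).charpoly
      = (-1)^n * (sig A.charpoly + sig (qpol A)) := by
  have hdet : ((charmatrix A).map sig).det ≠ 0 := by
    rw [det_charmatrix_map_sig]
    intro h
    exact A.charpoly_monic.ne_zero (sig_inj (by rw [h, map_zero]))
  rw [Matrix.charpoly, charmatrix_compl, Matrix.det_neg, Fintype.card_fin,
    detLemma _ hdet, det_charmatrix_map_sig]
  congr 1
  have hadj : ((charmatrix A).map sig).adjugate = (charmatrix A).adjugate.map sig := by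
    rw [show ((charmatrix A).map sig) = (sig : ℚ[X] →+* ℚ[X]).mapMatrix (charmatrix A) from rfl,
      ← RingHom.map_adjugate]
    rfl
  rw [hadj, qpol, map_sum]
  simp only [map_sum]
  simp [dotProduct, mulVec, Finset.mul_sum]

-- sum swap helper
lemma esum_smul_sum (s : Finset ℕ) (c : ℕ → ℚ) (f : ℕ → Mat n) :
    (∑ i, ∑ j, (∑ m ∈ s, c m • f m) i j) = ∑ m ∈ s, c m * (∑ i, ∑ j, f m i j) := by
  simp only [Matrix.sum_apply, Matrix.smul_apply, smul_eq_mul]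
  have h2 : ∀ i : Fin n, ∑ j : Fin n, ∑ m ∈ s, c m * f m i j
      = ∑ m ∈ s, ∑ j : Fin n, c m * f m i j := fun i => Finset.sum_comm ..
  simp only [h2]
  rw [Finset.sum_comm]
  exact Finset.sum_congr rfl fun m _ => by rw [Finset.mul_sum]; exact Finset.sum_congr rfl fun i _ => by rw [Finset.mul_sum]

lemma mom_rec (M : Mat n) {k : ℕ} (hn : 0 < n) (hk : n ≤ k) :
    mom M k = ∑ j ∈ Finset.range n, (-(M.charpoly.coeff j)) * mom M (k - n + j) := by
  have h0 := ch_sum M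
  rw [Finset.sum_range_succ, charpoly_coeff_top, one_smul] at h0
  have hMn : M ^ n = ∑ j ∈ Finset.range n, (-(M.charpoly.coeff j)) • M ^ j := by
    have h1 : M ^ n = -∑ j ∈ Finset.range n, M.charpoly.coeff j • M ^ j := by
      rw [eq_neg_iff_add_eq_zero, add_comm]
      exact h0
    rw [h1, ← Finset.sum_neg_distrib]
    exact Finset.sum_congr rfl fun j _ => by rw [neg_smul]
  have hk2 : M ^ k = ∑ j ∈ Finset.range n, (-(M.charpoly.coeff j)) • M ^ (k - n + j) := by
    have h3 : M ^ k = M ^ (k - n) * M ^ n := by rw [← pow_add]; congr 1; omega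
    rw [h3, hMn, Finset.mul_sum]
    refine Finset.sum_congr rfl fun j _ => ?_
    rw [mul_smul_comm, ← pow_add]
  rw [mom, hk2, esum_smul_sum]
  rfl

lemma mom_lt (A B : Mat n) (h1 : A.charpoly = B.charpoly) (hq : qpol A = qpol B) :
    ∀ r, r < n → mom A r = mom B r := by
  intro r
  induction r using Nat.strong_induction_on with
  | _ r ih =>
    intro hr
    have hc := congrArg (fun p => p.coeff (n - 1 - r)) hq
    simp only [qpol_coeff] at hc
    rw [← h1] at hc
    have hnn : n - (n - 1 - r) = r + 1 := by omega
    rw [hnn, Finset.sum_range_succ, Finset.sum_range_succ] at hc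
    have htop : r + (n - 1 - r) + 1 = n := by omega
    rw [htop, charpoly_coeff_top, one_mul, one_mul] at hc
    have hsum : ∑ i ∈ Finset.range r, A.charpoly.coeff (i + (n - 1 - r) + 1) * mom A i
        = ∑ i ∈ Finset.range r, A.charpoly.coeff (i + (n - 1 - r) + 1) * mom B i :=
      Finset.sum_congr rfl fun i hi => by
        rw [ih i (Finset.mem_range.mp hi) (by have := Finset.mem_range.mp hi; omega)]
    rw [hsum] at hc
    exact add_left_cancel hc

lemma mom_all (A B : Mat n) (hn : 0 < n) (h1 : A.charpoly = B.charpoly)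
    (hq : qpol A = qpol B) : ∀ k, mom A k = mom B k := by
  intro k
  induction k using Nat.strong_induction_on with
  | _ k ih =>
    by_cases hk : k < n
    · exact mom_lt A B h1 hq k hk
    · push_neg at hk
      rw [mom_rec A hn hk, mom_rec B hn hk, h1]
      refine Finset.sum_congr rfl fun j hj => ?_
      have hj' := Finset.mem_range.mp hj
      rw [ih (k - n + j) (by omega)]
lemma pow_top (M : Mat n) :
    M ^ n = ∑ j ∈ Finset.range n, (-(M.charpoly.coeff j)) • M ^ j := by
  have h0 := ch_sum M
  rw [Finset.sum_range_succ, charpoly_coeff_top, one_smul] at h0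
  have h1 : M ^ n = -∑ j ∈ Finset.range n, M.charpoly.coeff j • M ^ j := by
    rw [eq_neg_iff_add_eq_zero, add_comm]; exact h0
  rw [h1, ← Finset.sum_neg_distrib]
  exact Finset.sum_congr rfl fun j _ => by rw [neg_smul]

def comp (A : Mat n) : Mat n :=
  Matrix.of fun i j => if (j:ℕ) = n - 1 then -(A.charpoly.coeff i) else
    if (i:ℕ) = (j:ℕ) + 1 then 1 else 0

lemma mulVec_ones (N : Mat n) (i : Fin n) : (N *ᵥ fun _ => (1:ℚ)) i = ∑ j, N i j := by
  simp [mulVec, dotProduct]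

lemma wm_comp (A M : Mat n) (hM : M.charpoly = A.charpoly) :
    M * wmQ M = wmQ M * comp A := by
  apply Matrix.ext
  intro i j
  have hLHS : (M * wmQ M) i j = ((M ^ ((j:ℕ) + 1)) *ᵥ fun _ => (1:ℚ)) i := by
    rw [pow_succ', ← mulVec_mulVec]
    simp [Matrix.mul_apply, wmQ, mulVec, dotProduct]
  rw [hLHS, Matrix.mul_apply]
  by_cases hj : (j:ℕ) = n - 1
  · have hj1 : (j:ℕ) + 1 = n := by have := j.isLt; omega
    rw [hj1, pow_top]
    simp only [wmQ, Matrix.of_apply, comp, hj, if_true]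
    have hrw : ∀ i : Fin n,
        ((∑ m ∈ Finset.range n, (-(M.charpoly.coeff m)) • M ^ m) *ᵥ fun _ => (1:ℚ)) i
        = ∑ m ∈ Finset.range n, (-(M.charpoly.coeff m)) * ((M ^ m *ᵥ fun _ => (1:ℚ)) i) := by
      intro i
      rw [mulVec_ones]
      simp only [Matrix.sum_apply, Matrix.smul_apply, smul_eq_mul]
      rw [Finset.sum_comm]
      exact Finset.sum_congr rfl fun m _ => by rw [mulVec_ones, Finset.mul_sum]
    rw [hrw, hM]
    rw [← Fin.sum_univ_eq_sum_range (fun m => (-(A.charpoly.coeff m)) * ((M ^ m *ᵥ fun _ => (1:ℚ)) i))]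
    exact Finset.sum_congr rfl fun k _ => by ring
  · have hj1 : (j:ℕ) + 1 < n := by have := j.isLt; omega
    simp only [wmQ, Matrix.of_apply, comp, hj, if_false]
    rw [Finset.sum_eq_single (⟨(j:ℕ)+1, hj1⟩ : Fin n)]
    · simp
    · intro k _ hk
      have : ¬((k:ℕ) = (j:ℕ) + 1) := fun h => hk (Fin.ext (by simpa using h))
      simp [this]
    · intro h
      exact absurd (Finset.mem_univ _) h

lemma dot_pow (A : Mat n) (hA : Aᵀ = A) (a b : ℕ) :
    ((A ^ a) *ᵥ fun _ => (1:ℚ)) ⬝ᵥ ((A ^ b) *ᵥ fun _ => (1:ℚ)) = mom A (a + b) := by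
  rw [dotProduct_mulVec, ← Matrix.mulVec_transpose, transpose_pow, hA, mulVec_mulVec,
    ← pow_add]
  have h1 : ((A ^ (b + a)) *ᵥ fun _ => (1:ℚ)) ⬝ᵥ (fun _ => (1:ℚ)) = mom A (b + a) := by
    simp [dotProduct, mulVec_ones, mom, Finset.sum_mul]
  rw [show a + b = b + a from by omega, ← h1]

lemma gram (A B : Mat n) (hA : Aᵀ = A) (hB : Bᵀ = B) (hmom : ∀ k, mom A k = mom B k) :
    (wmQ A)ᵀ * wmQ A = (wmQ B)ᵀ * wmQ B := by
  apply Matrix.ext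
  intro i j
  have h : ∀ M : Mat n, (Mᵀ : Mat n) = M → ((wmQ M)ᵀ * wmQ M) i j = mom M ((i:ℕ) + (j:ℕ)) := by
    intro M hMs
    rw [Matrix.mul_apply]
    have : ∑ k, (wmQ M)ᵀ i k * wmQ M k j
        = ((M ^ (i:ℕ)) *ᵥ fun _ => (1:ℚ)) ⬝ᵥ ((M ^ (j:ℕ)) *ᵥ fun _ => (1:ℚ)) := by
      simp [wmQ, Matrix.transpose_apply, dotProduct]
    rw [this, dot_pow M hMs]
  rw [h A hA, h B hB, hmom]

lemma charpoly_conj (P M : Mat n) (hP : Pᵀ * P = 1) :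
    (Pᵀ * M * P).charpoly = M.charpoly := by
  have key : (C : ℚ →+* ℚ[X]).mapMatrix Pᵀ * charmatrix M * (C : ℚ →+* ℚ[X]).mapMatrix P
      = charmatrix (Pᵀ * M * P) := by
    rw [charmatrix, charmatrix, Matrix.mul_sub, Matrix.sub_mul]
    congr 1
    · rw [scalar_apply, ← smul_one_eq_diagonal, Matrix.mul_smul, Matrix.smul_mul,
        Matrix.mul_one, ← _root_.map_mul, hP, _root_.map_one]
    · rw [← _root_.map_mul, ← _root_.map_mul, Matrix.mul_assoc]
  rw [Matrix.charpoly, ← key, det_mul, det_mul, Matrix.charpoly]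
  have h2 : ((C : ℚ →+* ℚ[X]).mapMatrix Pᵀ).det * ((C : ℚ →+* ℚ[X]).mapMatrix P).det = 1 := by
    rw [← det_mul, ← _root_.map_mul, hP, _root_.map_one, det_one]
  calc ((C : ℚ →+* ℚ[X]).mapMatrix Pᵀ).det * (charmatrix M).det * ((C : ℚ →+* ℚ[X]).mapMatrix P).det
      = ((C : ℚ →+* ℚ[X]).mapMatrix Pᵀ).det * ((C : ℚ →+* ℚ[X]).mapMatrix P).det * (charmatrix M).det := by ring
    _ = (charmatrix M).det := by rw [h2, one_mul]
theorem core (hn : 0 < n) (A B : Mat n) (hA : Aᵀ = A) (hB : Bᵀ = B)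
    (hdetA : (wmQ A).det ≠ 0) (hcp : A.charpoly = B.charpoly)
    (hgram : (wmQ A)ᵀ * wmQ A = (wmQ B)ᵀ * wmQ B) :
    ∃! Q : Mat n,
      (Qᵀ * Q = 1 ∧ (Q *ᵥ fun _ => (1 : ℚ)) = (fun _ => 1)) ∧ Qᵀ * A * Q = B := by
  -- det of wmQ B nonzero
  have hdetB : (wmQ B).det ≠ 0 := by
    intro h
    have h1 := congrArg Matrix.det hgram
    rw [det_mul, det_mul, det_transpose, det_transpose, h] at h1
    simp only [mul_zero, zero_mul, mul_eq_zero] at h1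
    rcases h1 with h1 | h1 <;> exact hdetA h1
  have hUB : IsUnit (wmQ B).det := isUnit_iff_ne_zero.mpr hdetB
  have hUBt : IsUnit (wmQ B)ᵀ.det := by rwa [det_transpose]
  set Q : Mat n := wmQ A * (wmQ B)⁻¹ with hQdef
  -- Q transpose
  have hQt : Qᵀ = ((wmQ B)ᵀ)⁻¹ * (wmQ A)ᵀ := by
    rw [hQdef, Matrix.transpose_mul, Matrix.transpose_nonsing_inv]
  have hQW : Q * wmQ B = wmQ A := by
    rw [hQdef, Matrix.mul_assoc, Matrix.nonsing_inv_mul _ hUB, Matrix.mul_one]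
  -- orthogonality
  have horth : Qᵀ * Q = 1 := by
    rw [hQt, hQdef, Matrix.mul_assoc, ← Matrix.mul_assoc (wmQ A)ᵀ, hgram,
      Matrix.mul_assoc, Matrix.mul_nonsing_inv _ hUB, Matrix.mul_one,
      Matrix.nonsing_inv_mul _ hUBt]
  -- regularity
  have hcol0 : ∀ M : Mat n, (wmQ M *ᵥ Pi.single (⟨0, hn⟩ : Fin n) (1:ℚ)) = fun _ => (1:ℚ) := by
    intro M
    funext i
    rw [Matrix.mulVec_single]
    simp [wmQ, mulVec_ones, Matrix.one_apply]
  have hreg : (Q *ᵥ fun _ => (1:ℚ)) = fun _ => 1 := by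
    conv_lhs => rw [← hcol0 B]
    rw [mulVec_mulVec, hQW, hcol0 A]
  -- similarity
  have hAQ : A * Q = Q * B := by
    have h1 : A * wmQ A = wmQ A * comp A := wm_comp A A rfl
    have h2 : B * wmQ B = wmQ B * comp A := wm_comp A B hcp.symm
    have h3 : comp A * (wmQ B)⁻¹ = (wmQ B)⁻¹ * B := by
      have : wmQ B * (comp A * (wmQ B)⁻¹) = wmQ B * ((wmQ B)⁻¹ * B) := by
        rw [← Matrix.mul_assoc, ← h2, Matrix.mul_assoc, Matrix.mul_nonsing_inv _ hUB,
          ← Matrix.mul_assoc, Matrix.mul_nonsing_inv _ hUB, Matrix.one_mul, Matrix.mul_one]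
      calc comp A * (wmQ B)⁻¹ = ((wmQ B)⁻¹ * wmQ B) * (comp A * (wmQ B)⁻¹) := by
            rw [Matrix.nonsing_inv_mul _ hUB, Matrix.one_mul]
        _ = (wmQ B)⁻¹ * B := by
            rw [Matrix.mul_assoc, this, ← Matrix.mul_assoc, Matrix.nonsing_inv_mul _ hUB,
              Matrix.one_mul]
    rw [hQdef, ← Matrix.mul_assoc, h1, Matrix.mul_assoc, h3, ← Matrix.mul_assoc,
      Matrix.mul_assoc]
  have hconj : Qᵀ * A * Q = B := by
    rw [Matrix.mul_assoc, hAQ, ← Matrix.mul_assoc, horth, Matrix.one_mul]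
  refine ⟨Q, ⟨⟨horth, hreg⟩, hconj⟩, ?_⟩
  -- uniqueness
  rintro Q' ⟨⟨horth', hreg'⟩, hconj'⟩
  have hQQt' : Q' * Q'ᵀ = 1 := mul_eq_one_comm.mp horth'
  have hAQ' : A * Q' = Q' * B := by
    calc A * Q' = (Q' * Q'ᵀ) * A * Q' := by rw [hQQt', Matrix.one_mul]
      _ = Q' * (Q'ᵀ * A * Q') := by rw [Matrix.mul_assoc, Matrix.mul_assoc, Matrix.mul_assoc]
      _ = Q' * B := by rw [hconj']
  have hpow : ∀ k : ℕ, Q' * B ^ k = A ^ k * Q' := by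
    intro k
    induction k with
    | zero => simp
    | succ k ih =>
      rw [pow_succ, pow_succ, ← Matrix.mul_assoc, ih, Matrix.mul_assoc, ← hAQ',
        ← Matrix.mul_assoc]
  have hW : Q' * wmQ B = wmQ A := by
    apply Matrix.ext
    intro i j
    rw [Matrix.mul_apply]
    have h4 : ∑ k, Q' i k * wmQ B k j = (Q' *ᵥ ((B ^ (j:ℕ)) *ᵥ fun _ => (1:ℚ))) i := by
      simp [wmQ, mulVec, dotProduct]
    rw [h4, mulVec_mulVec, hpow, ← mulVec_mulVec, hreg']
    rfl
  calc Q' = Q' * (wmQ B * (wmQ B)⁻¹) := by rw [Matrix.mul_nonsing_inv _ hUB, Matrix.mul_one]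
    _ = wmQ A * (wmQ B)⁻¹ := by rw [← Matrix.mul_assoc, hW]
    _ = Q := rfl

def AQ (G : SimpleGraph (Fin n)) : Mat n := (adjMat n G).map (Int.cast : ℤ → ℚ)

lemma AQ_symm (G : SimpleGraph (Fin n)) : (AQ G)ᵀ = AQ G := by
  apply Matrix.ext
  intro i j
  simp only [Matrix.transpose_apply, AQ, Matrix.map_apply, adjMat, Matrix.of_apply]
  rw [SimpleGraph.adj_comm]

lemma AQ_compl (G : SimpleGraph (Fin n)) :
    AQ Gᶜ = (Matrix.of fun _ _ => (1:ℚ)) - 1 - AQ G := by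
  apply Matrix.ext
  intro i j
  simp only [AQ, Matrix.map_apply, adjMat, Matrix.of_apply, Matrix.sub_apply,
    Matrix.one_apply, SimpleGraph.compl_adj]
  by_cases h1 : i = j
  · subst h1
    simp [SimpleGraph.irrefl]
  · by_cases h2 : G.Adj i j <;> simp [h1, h2]

lemma charpoly_map_int (M : Matrix (Fin n) (Fin n) ℤ) :
    (M.map (Int.cast : ℤ → ℚ)).charpoly = M.charpoly.map (Int.castRingHom ℚ) :=
  Matrix.charpoly_map M (Int.castRingHom ℚ)

lemma charpoly_int_iff (M N : Matrix (Fin n) (Fin n) ℤ) :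
    M.charpoly = N.charpoly ↔
      (M.map (Int.cast : ℤ → ℚ)).charpoly = (N.map (Int.cast : ℤ → ℚ)).charpoly := by
  rw [charpoly_map_int, charpoly_map_int]
  constructor
  · intro h; rw [h]
  · intro h
    exact Polynomial.map_injective (Int.castRingHom ℚ) Int.cast_injective h

lemma wmQ_map (M : Matrix (Fin n) (Fin n) ℤ) :
    wmQ (M.map (Int.cast : ℤ → ℚ)) = (walkMat M).map (Int.cast : ℤ → ℚ) := by
  apply Matrix.ext
  intro i j
  have hp : (M.map (Int.cast : ℤ → ℚ)) ^ (j:ℕ) = (M ^ (j:ℕ)).map (Int.cast : ℤ → ℚ) := by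
    have := map_pow ((Int.castRingHom ℚ).mapMatrix) M (j:ℕ)
    simpa [RingHom.mapMatrix_apply] using this.symm
  simp only [wmQ, Matrix.of_apply, walkMat, Matrix.map_apply, hp, mulVec, dotProduct,
    mul_one]
  push_cast
  rfl

lemma wmQ_det_ne (M : Matrix (Fin n) (Fin n) ℤ) (h : (walkMat M).det ≠ 0) :
    (wmQ (M.map (Int.cast : ℤ → ℚ))).det ≠ 0 := by
  rw [wmQ_map]
  have : ((walkMat M).map (Int.cast : ℤ → ℚ)).det = ((walkMat M).det : ℚ) := by
    rw [show (walkMat M).map (Int.cast : ℤ → ℚ)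
        = (Int.castRingHom ℚ).mapMatrix (walkMat M) from rfl, ← RingHom.map_det]
    rfl
  rw [this]
  exact_mod_cast h

lemma conv (A B Q : Mat n) (horth : Qᵀ * Q = 1)
    (hreg : (Q *ᵥ fun _ => (1:ℚ)) = fun _ => 1) (hconj : Qᵀ * A * Q = B) :
    A.charpoly = B.charpoly ∧
      ((Matrix.of fun _ _ => (1:ℚ)) - 1 - A).charpoly
        = ((Matrix.of fun _ _ => (1:ℚ)) - 1 - B).charpoly := by
  have h1 : A.charpoly = B.charpoly := by rw [← hconj, charpoly_conj _ _ horth]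
  have hQt1 : (Qᵀ *ᵥ fun _ => (1:ℚ)) = fun _ => 1 := by
    conv_lhs => rw [← hreg]
    rw [mulVec_mulVec, horth, one_mulVec]
  have hJl : Qᵀ * (Matrix.of fun _ _ => (1:ℚ)) = Matrix.of fun _ _ => (1:ℚ) := by
    apply Matrix.ext
    intro i j
    rw [Matrix.mul_apply]
    have := congrFun hQt1 i
    simpa [mulVec, dotProduct] using this
  have hJr : (Matrix.of fun _ _ => (1:ℚ)) * Q = Matrix.of fun _ _ => (1:ℚ) := by
    apply Matrix.ext
    intro i j
    rw [Matrix.mul_apply]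
    have := congrFun hQt1 j
    simp only [mulVec, dotProduct, mul_one, Matrix.transpose_apply] at this
    simpa [Matrix.of_apply, one_mul] using this
  have hJ : Qᵀ * (Matrix.of fun _ _ => (1:ℚ)) * Q = Matrix.of fun _ _ => (1:ℚ) := by
    rw [hJl, hJr]
  have hmid : Qᵀ * ((Matrix.of fun _ _ => (1:ℚ)) - 1 - A) * Q
      = (Matrix.of fun _ _ => (1:ℚ)) - 1 - B := by
    rw [Matrix.mul_sub, Matrix.mul_sub, Matrix.sub_mul, Matrix.sub_mul, Matrix.mul_one,
      hJ, hconj, horth]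
  rw [← hmid, charpoly_conj _ _ horth]
  exact ⟨h1, rfl⟩

end JN

/-- Johnson–Newman / Wang–Xu: if `det W(G) ≠ 0`, then `H` is generalized
cospectral with `G` iff there is a unique regular rational orthogonal `Q` with `Qᵀ A(G) Q = A(H)`. -/
theorem stmt4 (n : ℕ) (G H : SimpleGraph (Fin n))
    (hdet : (walkMat (adjMat n G)).det ≠ 0) :
    genCospectral G H ↔
    ∃! Q : Matrix (Fin n) (Fin n) ℚ,
      (Qᵀ * Q = 1 ∧ (Q *ᵥ fun _ => (1 : ℚ)) = (fun _ => 1)) ∧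
      Qᵀ * (adjMat n G).map (Int.cast : ℤ → ℚ) * Q =
        (adjMat n H).map (Int.cast : ℤ → ℚ) := by
  rcases Nat.eq_zero_or_pos n with hn | hn
  · subst hn
    have hsub : ∀ (M N : Matrix (Fin 0) (Fin 0) ℤ), M = N :=
      fun M N => Matrix.ext fun i _ => i.elim0
    have hsubQ : ∀ (M N : Matrix (Fin 0) (Fin 0) ℚ), M = N :=
      fun M N => Matrix.ext fun i _ => i.elim0
    have hfun : ∀ (f g : Fin 0 → ℚ), f = g := fun f g => funext fun i => i.elim0
    constructor
    · intro _
      exact ⟨1, ⟨⟨hsubQ _ _, hfun _ _⟩, hsubQ _ _⟩, fun y _ => hsubQ _ _⟩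
    · intro _
      exact ⟨congrArg Matrix.charpoly (hsub _ _), congrArg Matrix.charpoly (hsub _ _)⟩
  · constructor
    · rintro ⟨h1, h2⟩
      have h1' : (JN.AQ G).charpoly = (JN.AQ H).charpoly := (JN.charpoly_int_iff _ _).mp h1
      have h2' : (JN.AQ Gᶜ).charpoly = (JN.AQ Hᶜ).charpoly := (JN.charpoly_int_iff _ _).mp h2
      rw [JN.AQ_compl, JN.AQ_compl, JN.compl_charpoly, JN.compl_charpoly] at h2'
      have h3 : JN.sig (JN.qpol (JN.AQ G)) = JN.sig (JN.qpol (JN.AQ H)) := by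
        have hc := mul_left_cancel₀
          (pow_ne_zero n (show (-1 : ℚ[X]) ≠ 0 by norm_num)) h2'
        rw [h1'] at hc
        exact add_left_cancel hc
      have hq := JN.sig_inj h3
      have hmom := JN.mom_all _ _ hn h1' hq
      have hgram := JN.gram _ _ (JN.AQ_symm G) (JN.AQ_symm H) hmom
      have hdetA := JN.wmQ_det_ne _ hdet
      exact JN.core hn _ _ (JN.AQ_symm G) (JN.AQ_symm H) hdetA h1' hgram
    · rintro ⟨Q, ⟨⟨horth, hreg⟩, hconj⟩, -⟩
      obtain ⟨e1, e2⟩ := JN.conv (JN.AQ G) (JN.AQ H) Q horth hreg hconj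
      rw [← JN.AQ_compl, ← JN.AQ_compl] at e2
      exact ⟨(JN.charpoly_int_iff _ _).mpr e1, (JN.charpoly_int_iff _ _).mpr e2⟩
end
end

section
/- Let Q be an n×n rational orthogonal matrix with level ℓ, and let X and Y be nonsingular n×n integral matrices such that QX = Y. Then ℓ divides gcd(d_n(X), d_n(Y)), where d_n(X) and d_n(Y) are the n-th (largest) invariant factors of X and Y respectively. -/
open Matrix

noncomputable section

/-- `ℓ` is the level of the rational matrix `Q`: the smallest positive integer `k`
such that `k • Q` is an integral matrix. -/
def IsLevel {n : ℕ} (Q : Matrix (Fin n) (Fin n) ℚ) (ℓ : ℕ) : Prop :=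
  0 < ℓ ∧ (∀ i j, ∃ z : ℤ, (ℓ : ℚ) * Q i j = z) ∧
  ∀ k : ℕ, 0 < k → (∀ i j, ∃ z : ℤ, (k : ℚ) * Q i j = z) → ℓ ≤ k

/-- A square integral matrix is unimodular if its determinant is a unit (i.e. `±1`). -/
def IsUnimodular {n : ℕ} (U : Matrix (Fin n) (Fin n) ℤ) : Prop :=
  IsUnit U.det

/-- `diag d` is the Smith normal form of `W`: `W = U (diag d) V` with `U, V` unimodular
and `d_i ∣ d_{i+1}`. -/
def IsSNF {n : ℕ} (W : Matrix (Fin n) (Fin n) ℤ) (d : Fin n → ℤ) : Prop :=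
  (∃ U V : Matrix (Fin n) (Fin n) ℤ, IsUnimodular U ∧ IsUnimodular V ∧
    W = U * Matrix.diagonal d * V) ∧
  ∀ i j : Fin n, i ≤ j → d i ∣ d j

lemma smul_one_eq_diag {R : Type*} [CommRing R] {n : ℕ} (m : R) :
    m • (1 : Matrix (Fin n) (Fin n) R) = Matrix.diagonal (fun _ => m) := by
  ext i j
  by_cases hij : i = j <;>
    simp [Matrix.smul_apply, Matrix.one_apply, Matrix.diagonal_apply, hij]

lemma snf_right_inv {n : ℕ} (X : Matrix (Fin n) (Fin n) ℤ) (d : Fin n → ℤ)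
    (h : IsSNF X d) (m : ℤ) (hm : ∀ i, d i ∣ m) :
    ∃ Z : Matrix (Fin n) (Fin n) ℤ, X * Z = m • (1 : Matrix (Fin n) (Fin n) ℤ) := by
  obtain ⟨⟨U, V, hU, hV, hW⟩, _⟩ := h
  have iU : Invertible U := U.invertibleOfIsUnitDet hU
  have iV : Invertible V := V.invertibleOfIsUnitDet hV
  refine ⟨⅟V * Matrix.diagonal (fun i => m / d i) * ⅟U, ?_⟩
  have hDD : Matrix.diagonal d * Matrix.diagonal (fun i => m / d i)
      = m • (1 : Matrix (Fin n) (Fin n) ℤ) := by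
    rw [Matrix.diagonal_mul_diagonal, smul_one_eq_diag]
    have he : (fun i => d i * (m / d i)) = fun _ : Fin n => m :=
      funext fun i => Int.mul_ediv_cancel' (hm i)
    rw [he]
  calc X * (⅟V * Matrix.diagonal (fun i => m / d i) * ⅟U)
      = U * ((Matrix.diagonal d * (V * ⅟V)) * Matrix.diagonal (fun i => m / d i)) * ⅟U := by
        rw [hW]
        simp only [Matrix.mul_assoc]
    _ = m • (1 : Matrix (Fin n) (Fin n) ℤ) := by
        rw [mul_invOf_self, Matrix.mul_one, hDD, Matrix.mul_smul, Matrix.mul_one,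
          Matrix.smul_mul, mul_invOf_self]

lemma level_dvd {n : ℕ} (Q : Matrix (Fin n) (Fin n) ℚ) (ℓ : ℕ) (hℓ : IsLevel Q ℓ)
    (m : ℤ) (h : ∀ i j, ∃ z : ℤ, (m : ℚ) * Q i j = z) : (ℓ : ℤ) ∣ m := by
  obtain ⟨hpos, hint, hmin⟩ := hℓ
  have habs : ∀ i j, ∃ z : ℤ, ((m.natAbs : ℕ) : ℚ) * Q i j = z := by
    intro i j
    obtain ⟨z, hz⟩ := h i j
    have hc : ((m.natAbs : ℕ) : ℚ) = |(m : ℚ)| := by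
      rw [Nat.cast_natAbs, Int.cast_abs]
    rcases abs_cases (m : ℚ) with ⟨ha, _⟩ | ⟨ha, _⟩
    · exact ⟨z, by rw [hc, ha, hz]⟩
    · refine ⟨-z, ?_⟩
      rw [hc, ha]
      push_cast
      rw [neg_mul, hz]
  set r := m.natAbs % ℓ with hr
  obtain ⟨q, hq⟩ : ∃ q, m.natAbs = ℓ * q + r := ⟨m.natAbs / ℓ, (Nat.div_add_mod m.natAbs ℓ).symm⟩
  have hrQ : ∀ i j, ∃ z : ℤ, (r : ℚ) * Q i j = z := by
    intro i j
    obtain ⟨z1, hz1⟩ := habs i j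
    obtain ⟨z2, hz2⟩ := hint i j
    refine ⟨z1 - q * z2, ?_⟩
    have hdm : (r : ℚ) = (m.natAbs : ℚ) - (q : ℚ) * (ℓ : ℚ) := by
      rw [hq]; push_cast; ring
    rw [hdm, sub_mul, hz1, mul_assoc, hz2]
    push_cast; ring
  have hr0 : r = 0 := by
    by_contra hne
    have h1 := hmin r (Nat.pos_of_ne_zero hne) hrQ
    have h2 : r < ℓ := Nat.mod_lt m.natAbs hpos
    omega
  have : ℓ ∣ m.natAbs := Nat.dvd_of_mod_eq_zero hr0
  exact Int.dvd_natAbs.mp (Int.natCast_dvd_natCast.mpr this)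

lemma map_mul_int {n : ℕ} (A B : Matrix (Fin n) (Fin n) ℤ) :
    (A * B).map (Int.cast : ℤ → ℚ) = A.map Int.cast * B.map Int.cast := by
  ext i j
  simp [Matrix.map_apply, Matrix.mul_apply]

lemma level_dvd_dn {n : ℕ} (Q : Matrix (Fin n) (Fin n) ℚ) (ℓ : ℕ) (hℓ : IsLevel Q ℓ)
    (X Y : Matrix (Fin n) (Fin n) ℤ)
    (hQXY : Q * X.map (Int.cast : ℤ → ℚ) = Y.map (Int.cast : ℤ → ℚ))
    (d : Fin n → ℤ) (hXs : IsSNF X d) (m : ℤ) (hm : ∀ i, d i ∣ m) : (ℓ : ℤ) ∣ m := by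
  obtain ⟨Z, hZ⟩ := snf_right_inv X d hXs m hm
  apply level_dvd Q ℓ hℓ m
  intro i j
  refine ⟨(Y * Z) i j, ?_⟩
  have key : (m : ℚ) • Q = (Y * Z).map (Int.cast : ℤ → ℚ) := by
    have h1 : Q * (X * Z).map (Int.cast : ℤ → ℚ) = (Y * Z).map (Int.cast : ℤ → ℚ) := by
      rw [map_mul_int, map_mul_int, ← Matrix.mul_assoc, hQXY]
    rw [hZ] at h1
    have h2 : ((m • (1 : Matrix (Fin n) (Fin n) ℤ)).map (Int.cast : ℤ → ℚ))
        = (m : ℚ) • (1 : Matrix (Fin n) (Fin n) ℚ) := by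
      ext a b
      rw [Matrix.map_apply, Matrix.smul_apply, Matrix.smul_apply, smul_eq_mul, smul_eq_mul]
      by_cases hab : a = b <;> simp [Matrix.one_apply, hab]
    rw [h2, Matrix.mul_smul, Matrix.mul_one] at h1
    exact h1
  have h3 := congrArg (fun M => M i j) key
  simpa [Matrix.smul_apply, Matrix.map_apply, smul_eq_mul] using h3

/-- Lemma 3: if `Q` is a rational orthogonal matrix of level `ℓ` and
`X`, `Y` are nonsingular integral matrices with `Q X = Y`, then `ℓ ∣ gcd (d_n(X), d_n(Y))`. -/
theorem stmt6 (n : ℕ) (hn : 0 < n) (Q : Matrix (Fin n) (Fin n) ℚ)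
    (hQ : Qᵀ * Q = 1) (ℓ : ℕ) (hℓ : IsLevel Q ℓ)
    (X Y : Matrix (Fin n) (Fin n) ℤ) (hX : X.det ≠ 0) (hY : Y.det ≠ 0)
    (hQXY : Q * X.map (Int.cast : ℤ → ℚ) = Y.map (Int.cast : ℤ → ℚ))
    (dX dY : Fin n → ℤ) (hXs : IsSNF X dX) (hYs : IsSNF Y dY) :
    (ℓ : ℤ) ∣ gcd (dX ⟨n - 1, Nat.sub_lt hn Nat.one_pos⟩)
                  (dY ⟨n - 1, Nat.sub_lt hn Nat.one_pos⟩) := by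
  set last : Fin n := ⟨n - 1, Nat.sub_lt hn Nat.one_pos⟩ with hlast
  have hle : ∀ i : Fin n, i ≤ last := fun i => Fin.le_def.mpr (Nat.le_pred_of_lt i.isLt)
  have hℓT : IsLevel Qᵀ ℓ := by
    obtain ⟨hpos, hint, hmin⟩ := hℓ
    exact ⟨hpos, fun i j => hint j i, fun k hk hk2 => hmin k hk fun i j => hk2 j i⟩
  have hQTYX : Qᵀ * Y.map (Int.cast : ℤ → ℚ) = X.map (Int.cast : ℤ → ℚ) := by
    rw [← hQXY, ← Matrix.mul_assoc, hQ, Matrix.one_mul]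
  have h1 : (ℓ : ℤ) ∣ dX last :=
    level_dvd_dn Q ℓ hℓ X Y hQXY dX hXs (dX last) (fun i => hXs.2 i last (hle i))
  have h2 : (ℓ : ℤ) ∣ dY last :=
    level_dvd_dn Qᵀ ℓ hℓT Y X hQTYX dY hYs (dY last) (fun i => hYs.2 i last (hle i))
  exact dvd_gcd h1 h2
end
end

section
/- Let G be a simple graph on n vertices with adjacency matrix A and det W(G) ≠ 0, let p be a prime, and suppose the Smith normal form of W(G) is diag(d_1, ..., d_r, d_{r+1}, ..., d_n) where p ∤ d_r and p | d_{r+1}. Let a_0, ..., a_{r−1} be integers such that a_0 e + a_1 Ae + ··· + a_{r−1} A^{r−1}e + A^r e ≡ 0 (mod p), and set M = a_0 I + a_1 A + ··· + a_{r−1} A^{r−1} + A^r. Then the matrix Ŵ = [e, Ae, ..., A^{r−1}e, Me/p, AMe/p, ..., A^{n−r−1}Me/p] is an integral matrix whose Smith normal form is diag(d_1, ..., d_r, d_{r+1}/p, ..., d_n/p). -/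
open Matrix Polynomial
open scoped Classical

noncomputable section

/-- Membership in `Q(G)`: `Q` is a regular rational orthogonal matrix such that
`Qᵀ A Q` is a 0-1 matrix. -/
def inQSet {n : ℕ} (A : Matrix (Fin n) (Fin n) ℤ) (Q : Matrix (Fin n) (Fin n) ℚ) : Prop :=
  Qᵀ * Q = 1 ∧ (Q *ᵥ fun _ => (1 : ℚ)) = (fun _ => 1) ∧
  ∀ i j, (Qᵀ * A.map (Int.cast : ℤ → ℚ) * Q) i j = 0 ∨
         (Qᵀ * A.map (Int.cast : ℤ → ℚ) * Q) i j = 1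

/-- The matrix `M = a₀I + a₁A + ⋯ + a_{r-1}A^{r-1} + A^r`. -/
def Mpoly {n : ℕ} (A : Matrix (Fin n) (Fin n) ℤ) (r : ℕ) (a : Fin r → ℤ) :
    Matrix (Fin n) (Fin n) ℤ :=
  (∑ i : Fin r, a i • A ^ (i : ℕ)) + A ^ r

/-- The matrix `Ŵ = [e, Ae, …, A^{r-1}e, Me/p, AMe/p, …, A^{n-r-1}Me/p]`. -/
def What {n : ℕ} (A : Matrix (Fin n) (Fin n) ℤ) (r : ℕ) (a : Fin r → ℤ) (p : ℕ) :
    Matrix (Fin n) (Fin n) ℤ :=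
  Matrix.of fun k j =>
    if (j : ℕ) < r then ((A ^ (j : ℕ)) *ᵥ fun _ => (1 : ℤ)) k
    else ((A ^ ((j : ℕ) - r) * Mpoly A r a) *ᵥ fun _ => (1 : ℤ)) k / (p : ℤ)

/-- auxiliary upper-triangular matrix C -/
def Cmat {n : ℕ} (r : ℕ) (a : Fin r → ℤ) : Matrix (Fin n) (Fin n) ℤ :=
  Matrix.of fun k j =>
    if (j : ℕ) < r then (if k = j then 1 else 0)
    else (∑ i : Fin r, a i * (if (k : ℕ) = (j : ℕ) - r + (i : ℕ) then 1 else 0))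
      + (if k = j then 1 else 0)

lemma Cmat_det {n r : ℕ} (a : Fin r → ℤ) : (Cmat (n := n) r a).det = 1 := by
  have htri : (Cmat (n := n) r a).BlockTriangular id := by
    intro i j hij
    simp only [id_eq] at hij
    simp only [Cmat, Matrix.of_apply]
    have hne : i ≠ j := ne_of_gt hij
    by_cases hj : (j : ℕ) < r
    · simp [hj, hne]
    · simp only [hj, if_false]
      have : ∀ i' : Fin r, a i' * (if (i : ℕ) = (j : ℕ) - r + (i' : ℕ) then 1 else 0) = 0 := by
        intro i'
        have : (i : ℕ) ≠ (j : ℕ) - r + (i' : ℕ) := by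
          have := i'.isLt
          have hji : (j : ℕ) < (i : ℕ) := hij
          omega
        simp [this]
      rw [Finset.sum_congr rfl (fun i' _ => this i')]
      simp [hne]
  rw [Matrix.det_of_upperTriangular htri]
  apply Finset.prod_eq_one
  intro j _
  simp only [Cmat, Matrix.of_apply]
  by_cases hj : (j : ℕ) < r
  · simp [hj]
  · simp only [hj, if_false, if_pos rfl]
    have : ∀ i' : Fin r, a i' * (if (j : ℕ) = (j : ℕ) - r + (i' : ℕ) then 1 else 0) = 0 := by
      intro i'
      have : (j : ℕ) ≠ (j : ℕ) - r + (i' : ℕ) := by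
        have := i'.isLt; omega
      simp [this]
    rw [Finset.sum_congr rfl (fun i' _ => this i')]
    simp

lemma WC_eq {n : ℕ} (A : Matrix (Fin n) (Fin n) ℤ) (r : ℕ) (a : Fin r → ℤ)
    (k j : Fin n) :
    (walkMat A * Cmat (n := n) r a) k j =
      if (j : ℕ) < r then ((A ^ (j : ℕ)) *ᵥ fun _ => (1 : ℤ)) k
      else ((A ^ ((j : ℕ) - r) * Mpoly A r a) *ᵥ fun _ => (1 : ℤ)) k := by
  have expand : ∀ (B : Matrix (Fin n) (Fin n) ℤ), (B *ᵥ fun _ => (1 : ℤ)) k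
      = ∑ m : Fin n, B k m := by
    intro B
    simp [Matrix.mulVec, dotProduct]
  rw [Matrix.mul_apply]
  by_cases hj : (j : ℕ) < r
  · simp only [Cmat, Matrix.of_apply, hj, if_true, mul_ite, mul_one, mul_zero,
      Finset.sum_ite_eq', Finset.mem_univ, if_true]
    simp [walkMat]
  · simp only [Cmat, Matrix.of_apply, hj, if_false]
    push_neg at hj
    have hlt : ∀ i : Fin r, (j : ℕ) - r + (i : ℕ) < n := by
      intro i; have := i.isLt; have := j.isLt; omega
    have hsplit : ∀ m : Fin n, walkMat A k m *
        ((∑ i : Fin r, a i * (if (m : ℕ) = (j : ℕ) - r + (i : ℕ) then 1 else 0))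
          + (if m = j then 1 else 0))
        = (∑ i : Fin r, (if m = (⟨(j : ℕ) - r + (i : ℕ), hlt i⟩ : Fin n)
            then a i * walkMat A k m else 0))
          + (if m = j then walkMat A k m else 0) := by
      intro m
      rw [mul_add]
      congr 1
      · rw [Finset.mul_sum]
        refine Finset.sum_congr rfl fun i _ => ?_
        by_cases h : (m : ℕ) = (j : ℕ) - r + (i : ℕ)
        · rw [if_pos h, if_pos (Fin.ext h), mul_one, mul_comm]
        · rw [if_neg h, if_neg (fun hh => h (congrArg Fin.val hh)), mul_zero, mul_zero]
      · split_ifs <;> ring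
    have lhs_eq : (∑ m : Fin n, walkMat A k m *
        ((∑ i : Fin r, a i * (if (m : ℕ) = (j : ℕ) - r + (i : ℕ) then 1 else 0))
          + (if m = j then 1 else 0)))
        = (∑ i : Fin r, a i * walkMat A k ⟨(j : ℕ) - r + (i : ℕ), hlt i⟩)
          + walkMat A k j := by
      rw [Finset.sum_congr rfl fun m _ => hsplit m, Finset.sum_add_distrib,
        Finset.sum_comm]
      simp only [Finset.sum_ite_eq', Finset.mem_univ, if_true]
    rw [lhs_eq]
    have hM : A ^ ((j : ℕ) - r) * Mpoly A r a
        = (∑ i : Fin r, a i • A ^ ((j : ℕ) - r + (i : ℕ))) + A ^ (j : ℕ) := by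
      unfold Mpoly
      rw [Matrix.mul_add, Finset.mul_sum]
      congr 1
      · refine Finset.sum_congr rfl fun i _ => ?_
        rw [Matrix.mul_smul, ← pow_add]
      · rw [← pow_add]
        congr 1
        omega
    rw [hM, expand]
    simp only [Matrix.add_apply, Matrix.sum_apply, Matrix.smul_apply, smul_eq_mul,
      Finset.sum_add_distrib]
    rw [Finset.sum_comm]
    congr 1
    · refine Finset.sum_congr rfl fun i _ => ?_
      rw [← Finset.mul_sum, ← expand]
      simp [walkMat]
    · rw [← expand]
      simp [walkMat]

/-- Lemma 7: if the SNF of `W(G)` is `diag(d₁,…,dₙ)` with `p ∤ d_r`,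
`p ∣ d_{r+1}`, and `Me ≡ 0 (mod p)` where `M = a₀I + ⋯ + a_{r-1}A^{r-1} + A^r`, then
`Ŵ` is integral, with SNF `diag(d₁,…,d_r, d_{r+1}/p, …, d_n/p)`. -/
theorem stmt10 (n : ℕ) (G : SimpleGraph (Fin n)) (p : ℕ) (hp : p.Prime)
    (hdet : (walkMat (adjMat n G)).det ≠ 0)
    (r : ℕ) (hr0 : 0 < r) (hrn : r < n)
    (d : Fin n → ℤ) (hSNF : IsSNF (walkMat (adjMat n G)) d)
    (hdr : ¬ (p : ℤ) ∣ d ⟨r - 1, by omega⟩) (hdr1 : (p : ℤ) ∣ d ⟨r, hrn⟩)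
    (a : Fin r → ℤ)
    (ha : ∀ k : Fin n, (p : ℤ) ∣ ((Mpoly (adjMat n G) r a) *ᵥ fun _ => (1 : ℤ)) k) :
    (∀ (k : Fin n) (i : ℕ), i < n - r →
      (p : ℤ) ∣ (((adjMat n G) ^ i * Mpoly (adjMat n G) r a) *ᵥ fun _ => (1 : ℤ)) k) ∧
    IsSNF (What (adjMat n G) r a p)
      (fun i => if (i : ℕ) < r then d i else d i / (p : ℤ)) := by
  set A := adjMat n G with hA
  have hpz : (p : ℤ) ≠ 0 := by
    exact_mod_cast hp.ne_zero
  have hpp : Prime (p : ℤ) := Nat.prime_iff_prime_int.mp hp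
  have part1 : ∀ (i : ℕ) (k : Fin n),
      (p : ℤ) ∣ ((A ^ i * Mpoly A r a) *ᵥ fun _ => (1 : ℤ)) k := by
    intro i k
    rw [← Matrix.mulVec_mulVec]
    have : (A ^ i *ᵥ (Mpoly A r a *ᵥ fun _ => (1 : ℤ))) k
        = ∑ m : Fin n, (A ^ i) k m * (Mpoly A r a *ᵥ fun _ => (1 : ℤ)) m := rfl
    rw [this]
    exact Finset.dvd_sum fun m _ => Dvd.dvd.mul_left (ha m) _
  set d' : Fin n → ℤ := fun i => if (i : ℕ) < r then d i else d i / (p : ℤ) with hd'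
  refine ⟨fun k i _ => part1 i k, ?_⟩
  obtain ⟨⟨U, V, hU, hV, hW⟩, hdvd⟩ := hSNF
  set W := walkMat A with hWdef
  set C := Cmat (n := n) r a with hC
  set Dd : Fin n → ℤ := fun j => if (j : ℕ) < r then 1 else (p : ℤ) with hDd
  set B := V * C with hB
  have hDdne : ∀ j : Fin n, Dd j ≠ 0 := by
    intro j
    by_cases h : (j : ℕ) < r <;> simp [hDd, h, hpz, hp.ne_zero]
  have hpd : ∀ i : Fin n, r ≤ (i : ℕ) → (p : ℤ) ∣ d i := by
    intro i hi
    exact dvd_trans hdr1 (hdvd ⟨r, hrn⟩ i (by simpa [Fin.le_def] using hi))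
  have hpnd : ∀ i : Fin n, (i : ℕ) < r → ¬ (p : ℤ) ∣ d i := by
    intro i hi hcon
    exact hdr (dvd_trans hcon (hdvd i ⟨r - 1, by omega⟩ (by simp [Fin.le_def]; omega)))
  -- W * C = What * diagonal Dd
  have key1 : W * C = What A r a p * Matrix.diagonal Dd := by
    ext k j
    rw [Matrix.mul_diagonal, WC_eq]
    by_cases hj : (j : ℕ) < r
    · simp [What, hj, hDd]
    · simp only [What, Matrix.of_apply, hj, if_false, hDd]
      rw [Int.ediv_mul_cancel (part1 _ _)]
  haveI : Invertible U := U.invertibleOfIsUnitDet hU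
  have hDB : Matrix.diagonal d * B = ⅟U * (W * C) := by
    rw [hW, hB, Matrix.mul_assoc (U * Matrix.diagonal d) V C,
      Matrix.mul_assoc U (Matrix.diagonal d) (V * C), Matrix.invOf_mul_cancel_left]
  have keyB : ∀ i j : Fin n, (i : ℕ) < r → r ≤ (j : ℕ) → (p : ℤ) ∣ B i j := by
    intro i j hi hj
    have h1 : (p : ℤ) ∣ (Matrix.diagonal d * B) i j := by
      rw [hDB, Matrix.mul_apply]
      refine Finset.dvd_sum fun m _ => Dvd.dvd.mul_left ?_ _
      rw [key1, Matrix.mul_diagonal]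
      have hDj : Dd j = (p : ℤ) := if_neg (not_lt.2 hj)
      rw [hDj]
      exact dvd_mul_left _ _
    rw [Matrix.diagonal_mul] at h1
    exact (hpp.dvd_mul.mp h1).resolve_left (hpnd i hi)
  -- the new right unimodular factor
  set V' : Matrix (Fin n) (Fin n) ℤ := Matrix.of fun i j =>
    if (i : ℕ) < r then (if (j : ℕ) < r then B i j else B i j / p)
    else (if (j : ℕ) < r then (p : ℤ) * B i j else B i j) with hV'
  have keyV' : Matrix.diagonal Dd * B = V' * Matrix.diagonal Dd := by
    ext i j
    rw [Matrix.diagonal_mul, Matrix.mul_diagonal]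
    by_cases hi : (i : ℕ) < r <;> by_cases hj : (j : ℕ) < r <;>
      simp only [hV', Matrix.of_apply, hi, hj, if_true, if_false, hDd]
    · ring
    · rw [Int.ediv_mul_cancel (keyB i j hi (not_lt.1 hj))]
      ring
    · ring
    · ring
  have hdetDd : (Matrix.diagonal Dd).det ≠ 0 := by
    rw [Matrix.det_diagonal]
    exact Finset.prod_ne_zero_iff.2 fun j _ => hDdne j
  have hV'uni : IsUnimodular V' := by
    have h2 : (Matrix.diagonal Dd).det * B.det = V'.det * (Matrix.diagonal Dd).det := by
      rw [← Matrix.det_mul, ← Matrix.det_mul, keyV']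
    have h3 : V'.det = B.det := by
      have := h2
      rw [mul_comm (Matrix.diagonal Dd).det B.det] at this
      exact (mul_right_cancel₀ hdetDd this).symm
    rw [IsUnimodular, h3, hB, Matrix.det_mul, Cmat_det, mul_one]
    exact hV
  have hdiag : Matrix.diagonal d'
      * Matrix.diagonal Dd = Matrix.diagonal d := by
    rw [Matrix.diagonal_mul_diagonal]
    have hfun : (fun i => d' i * Dd i) = d := by
      funext i
      by_cases hi : (i : ℕ) < r
      · simp [hd', hDd, hi]
      · simp only [hd', hDd, hi, if_false]
        exact Int.ediv_mul_cancel (hpd i (not_lt.1 hi))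
    rw [hfun]
  have hfact : What A r a p
      = U * Matrix.diagonal d' * V' := by
    have hall : What A r a p * Matrix.diagonal Dd
        = (U * Matrix.diagonal d' * V')
          * Matrix.diagonal Dd := by
      rw [← key1, hW]
      calc U * Matrix.diagonal d * V * C
          = U * (Matrix.diagonal d * B) := by
            rw [hB, Matrix.mul_assoc (U * Matrix.diagonal d) V C, Matrix.mul_assoc]
        _ = U * ((Matrix.diagonal d'
              * Matrix.diagonal Dd) * B) := by rw [hdiag]
        _ = U * (Matrix.diagonal d'
              * (V' * Matrix.diagonal Dd)) := by
            rw [Matrix.mul_assoc (Matrix.diagonal _) (Matrix.diagonal Dd) B, keyV']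
        _ = _ := by noncomm_ring
    ext k j
    have := congrFun (congrFun hall k) j
    rw [Matrix.mul_diagonal, Matrix.mul_diagonal] at this
    exact mul_right_cancel₀ (hDdne j) this
  refine ⟨⟨U, V', hU, hV'uni, hfact⟩, ?_⟩
  intro i j hij
  have hij' : (i : ℕ) ≤ (j : ℕ) := hij
  have hdij : d i ∣ d j := hdvd i j hij
  by_cases hi : (i : ℕ) < r <;> by_cases hj : (j : ℕ) < r <;>
    simp only [hd', hi, hj, if_true, if_false]
  · exact hdij
  · -- d i ∣ d j / p, with ¬p ∣ d i and p ∣ d j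
    have hco : IsCoprime (d i) (p : ℤ) :=
      ((Prime.coprime_iff_not_dvd hpp).mpr (hpnd i hi)).symm
    have hdj : (p : ℤ) * (d j / p) = d j := Int.mul_ediv_cancel' (hpd j (not_lt.1 hj))
    exact hco.dvd_of_dvd_mul_left (by rw [hdj]; exact hdij)
  · omega
  · exact Int.ediv_dvd_ediv (hpd i (not_lt.1 hi)) hdij
end
end

section
/- Let p be an odd prime and let G and H be generalized cospectral simple graphs on n vertices with adjacency matrices A and B and common characteristic polynomial φ(x) = x^n + c_2 x^{n−2} + ··· + c_{n−1} x + c_n (the coefficient of x^{n−1} is 0). Suppose rank_p W(G) = rank_p W(H) = n−1 and that φ(x) ≡ 0 (mod p) does not have two distinct roots in F_p. Then the linear systems W(G)x ≡ 0 (mod p) and W(H)x ≡ 0 (mod p) have the same set of solutions over F_p. -/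
open Matrix Polynomial
open scoped Classical

noncomputable section

def polyOf {K : Type*} [CommRing K] (n : ℕ) (x : Fin n → K) : Polynomial K :=
  ∑ j : Fin n, Polynomial.C (x j) * Polynomial.X ^ (j : ℕ)

lemma polyOf_coeff {K : Type*} [CommRing K] (n : ℕ) (x : Fin n → K) (k : ℕ) :
    (polyOf n x).coeff k = if h : k < n then x ⟨k, h⟩ else 0 := by
  rw [polyOf, Polynomial.finset_sum_coeff]
  simp only [Polynomial.coeff_C_mul, Polynomial.coeff_X_pow]
  split_ifs with h
  · rw [Finset.sum_eq_single (⟨k, h⟩ : Fin n)]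
    · simp
    · intro b _ hb
      rw [if_neg, mul_zero]
      intro hk
      exact hb (by simp [Fin.ext_iff, ← hk])
    · intro hb; exact absurd (Finset.mem_univ _) hb
  · apply Finset.sum_eq_zero
    intro b _
    rw [if_neg, mul_zero]
    intro hk; exact h (hk ▸ b.2)

lemma polyOf_degree_lt {K : Type*} [CommRing K] (n : ℕ) (x : Fin n → K) :
    (polyOf n x).degree < n := by
  rw [Polynomial.degree_lt_iff_coeff_zero]
  intro m hm
  rw [polyOf_coeff, dif_neg (by exact_mod_cast not_lt.mpr (by exact_mod_cast hm))]

lemma polyOf_eq {K : Type*} [CommRing K] {n : ℕ} (f : K[X]) (hf : f.degree < n) :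
    polyOf n (fun j => f.coeff j) = f := by
  ext k
  rw [polyOf_coeff]
  split_ifs with h
  · rfl
  · exact (Polynomial.coeff_eq_zero_of_degree_lt (hf.trans_le (by exact_mod_cast not_lt.mp h))).symm

lemma polyOf_smul {K : Type*} [CommRing K] (n : ℕ) (c : K) (x : Fin n → K) :
    polyOf n (c • x) = Polynomial.C c * polyOf n x := by
  rw [polyOf, polyOf, Finset.mul_sum]
  refine Finset.sum_congr rfl fun j _ => ?_
  rw [Pi.smul_apply, smul_eq_mul, Polynomial.C_mul, mul_assoc]


/-- the annihilator ideal of the all-ones vector w.r.t. a matrix -/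
def annIdeal {K : Type*} [Field K] {n : ℕ} (M : Matrix (Fin n) (Fin n) K) : Ideal (Polynomial K) where
  carrier := {f | (Polynomial.aeval M f) *ᵥ (fun _ => (1 : K)) = 0}
  add_mem' := by
    intro a b ha hb
    simp only [Set.mem_setOf_eq] at *
    rw [map_add, Matrix.add_mulVec, ha, hb, add_zero]
  zero_mem' := by simp
  smul_mem' := by
    intro c f hf
    simp only [Set.mem_setOf_eq, smul_eq_mul] at *
    rw [_root_.map_mul, ← Matrix.mulVec_mulVec, hf, Matrix.mulVec_zero]

lemma mem_annIdeal_iff {K : Type*} [Field K] {n : ℕ} (M : Matrix (Fin n) (Fin n) K) (f : Polynomial K) :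
    f ∈ annIdeal M ↔ (Polynomial.aeval M f) *ᵥ (fun _ => (1 : K)) = 0 := Iff.rfl

lemma walk_mulVec {n : ℕ} (A : Matrix (Fin n) (Fin n) ℤ) {K : Type*} [Field K]
    (f : ℤ →+* K) (x : Fin n → K) :
    ((walkMat A).map f) *ᵥ x = (Polynomial.aeval (A.map f) (polyOf n x)) *ᵥ (fun _ => (1 : K)) := by
  have hpow : ∀ j : ℕ, (A.map f) ^ j = (A ^ j).map f := by
    intro j
    rw [← RingHom.mapMatrix_apply, ← RingHom.mapMatrix_apply, map_pow]
  have haeval : Polynomial.aeval (A.map f) (polyOf n x)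
      = ∑ j : Fin n, x j • (A ^ (j : ℕ)).map f := by
    rw [polyOf, map_sum]
    refine Finset.sum_congr rfl fun j _ => ?_
    rw [_root_.map_mul, map_pow, Polynomial.aeval_C, Polynomial.aeval_X,
      Algebra.algebraMap_eq_smul_one, smul_mul_assoc, one_mul, hpow]
  rw [haeval]
  funext i
  simp only [Matrix.mulVec, dotProduct, Finset.sum_apply, Matrix.sum_apply,
    Matrix.smul_apply, Matrix.map_apply, smul_eq_mul, mul_one, walkMat, Matrix.of_apply, map_sum]
  rw [Finset.sum_comm]
  refine Finset.sum_congr rfl fun j _ => ?_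
  rw [← Finset.mul_sum, mul_comm]

lemma ker_iff {n : ℕ} (A : Matrix (Fin n) (Fin n) ℤ) {K : Type*} [Field K]
    (f : ℤ →+* K) (x : Fin n → K) :
    ((walkMat A).map f) *ᵥ x = 0 ↔ polyOf n x ∈ annIdeal (A.map f) := by
  rw [mem_annIdeal_iff, walk_mulVec]

lemma generator_stuff {n : ℕ} (A : Matrix (Fin n) (Fin n) ℤ) {K : Type*} [Field K]
    (f : ℤ →+* K) (hrk : ((walkMat A).map f).rank = n - 1) (hn : 1 ≤ n) :
    ∃ g : Polynomial K, g ≠ 0 ∧ g.natDegree = n - 1 ∧ g ∣ A.charpoly.map f ∧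
      ∀ x : Fin n → K, ((walkMat A).map f) *ᵥ x = 0 ↔ g ∣ polyOf n x := by
  haveI : (annIdeal (A.map f)).IsPrincipal := IsPrincipalIdealRing.principal _
  set g := Submodule.IsPrincipal.generator (annIdeal (A.map f)) with hgdef
  have hmem : ∀ q : Polynomial K, q ∈ annIdeal (A.map f) ↔ g ∣ q := fun q =>
    Submodule.IsPrincipal.mem_iff_generator_dvd (annIdeal (A.map f))
  have hker : ∀ x : Fin n → K, ((walkMat A).map f) *ᵥ x = 0 ↔ g ∣ polyOf n x := by
    intro x; rw [ker_iff A f x, hmem]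
  have hphi : (A.map f).charpoly = A.charpoly.map f := Matrix.charpoly_map A f
  have hphimem : A.charpoly.map f ∈ annIdeal (A.map f) := by
    rw [mem_annIdeal_iff, ← hphi, Matrix.aeval_self_charpoly, Matrix.zero_mulVec]
  have hphidvd : g ∣ A.charpoly.map f := (hmem _).mp hphimem
  have hphine : A.charpoly.map f ≠ 0 := ((Matrix.charpoly_monic A).map f).ne_zero
  have hg0 : g ≠ 0 := by
    intro h0
    rw [h0] at hphidvd
    exact hphine (zero_dvd_iff.mp hphidvd)
  have hker1 : Module.finrank K ↥(LinearMap.ker (Matrix.mulVecLin ((walkMat A).map f))) = 1 := by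
    have h2 := LinearMap.finrank_range_add_finrank_ker (Matrix.mulVecLin ((walkMat A).map f))
    rw [Module.finrank_fin_fun] at h2
    have hrk' : Module.finrank K ↥(LinearMap.range (Matrix.mulVecLin ((walkMat A).map f))) = n - 1 := hrk
    omega
  obtain ⟨v, hv0, hvspan⟩ := finrank_eq_one_iff'.mp hker1
  have hvker : ((walkMat A).map f) *ᵥ (v : Fin n → K) = 0 := by
    have h := v.2; rwa [LinearMap.mem_ker, Matrix.mulVecLin_apply] at h
  have hvne : (v : Fin n → K) ≠ 0 := fun h => hv0 (Subtype.ext h)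
  have hpv : polyOf n (v : Fin n → K) ≠ 0 := by
    intro h
    apply hvne
    funext j
    have h2 := polyOf_coeff n (v : Fin n → K) (j : ℕ)
    rw [h, Polynomial.coeff_zero, dif_pos j.isLt] at h2
    simpa using h2.symm
  have hgdvdv : g ∣ polyOf n (v : Fin n → K) := (hker _).mp hvker
  have hdegle : g.natDegree < n := by
    have h1 : g.degree ≤ (polyOf n (v : Fin n → K)).degree :=
      Polynomial.degree_le_of_dvd hgdvdv hpv
    exact (Polynomial.natDegree_lt_iff_degree_lt hg0).mpr
      (h1.trans_lt (polyOf_degree_lt n (v : Fin n → K)))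
  by_cases hd : g.natDegree = n - 1
  · exact ⟨g, hg0, hd, hphidvd, hker⟩
  exfalso
  have hgdeg : g.degree < (n : ℕ) :=
    (Polynomial.natDegree_lt_iff_degree_lt hg0).mp hdegle
  have hXgne : Polynomial.X * g ≠ 0 := mul_ne_zero Polynomial.X_ne_zero hg0
  have hXgnat : (Polynomial.X * g).natDegree = g.natDegree + 1 := by
    rw [Polynomial.natDegree_mul Polynomial.X_ne_zero hg0, Polynomial.natDegree_X]; omega
  have hXgdeg : (Polynomial.X * g).degree < ((n : ℕ) : WithBot ℕ) := by
    rw [← Polynomial.natDegree_lt_iff_degree_lt hXgne, hXgnat]; omega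
  set w1 : Fin n → K := fun j => g.coeff j with hw1def
  set w2 : Fin n → K := fun j => (Polynomial.X * g).coeff j with hw2def
  have hw1 : polyOf n w1 = g := polyOf_eq g hgdeg
  have hw2 : polyOf n w2 = Polynomial.X * g := polyOf_eq _ hXgdeg
  have hw1ker : ((walkMat A).map f) *ᵥ w1 = 0 := (hker w1).mpr (by rw [hw1])
  have hw2ker : ((walkMat A).map f) *ᵥ w2 = 0 :=
    (hker w2).mpr (by rw [hw2]; exact dvd_mul_left g Polynomial.X)
  obtain ⟨c, hc⟩ := hvspan ⟨w1, by rw [LinearMap.mem_ker, Matrix.mulVecLin_apply]; exact hw1ker⟩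
  obtain ⟨d, hdq⟩ := hvspan ⟨w2, by rw [LinearMap.mem_ker, Matrix.mulVecLin_apply]; exact hw2ker⟩
  have hc' : c • (v : Fin n → K) = w1 := congrArg Subtype.val hc
  have hd' : d • (v : Fin n → K) = w2 := congrArg Subtype.val hdq
  have hcne : c ≠ 0 := by
    rintro rfl
    rw [zero_smul] at hc'
    apply hg0
    rw [← hw1, ← hc']
    simp [polyOf]
  have hw2w1 : w2 = (d * c⁻¹) • w1 := by
    rw [← hc', ← hd', smul_smul, mul_assoc, inv_mul_cancel₀ hcne, mul_one]
  have hXg_eq : Polynomial.X * g = Polynomial.C (d * c⁻¹) * g := by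
    rw [← hw2, hw2w1, polyOf_smul, hw1]
  have h2 : (Polynomial.C (d * c⁻¹) * g).natDegree ≤ g.natDegree :=
    Polynomial.natDegree_C_mul_le _ _
  rw [hXg_eq] at hXgnat
  omega

lemma deg_one_factor {K : Type*} [Field K] (q : Polynomial K) (hq : q.natDegree = 1) :
    ∃ c a : K, c ≠ 0 ∧ q = Polynomial.C c * (Polynomial.X - Polynomial.C a) := by
  have hq0 : q ≠ 0 := fun h => by simp [h] at hq
  have h1 : q.coeff 1 ≠ 0 := by
    have h2 := Polynomial.leadingCoeff_ne_zero.mpr hq0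
    rwa [Polynomial.leadingCoeff, hq] at h2
  set c1 := q.coeff 1 with hc1
  set c0 := q.coeff 0 with hc0
  refine ⟨c1, -(c0 / c1), h1, ?_⟩
  have h2 : q = Polynomial.C c1 * Polynomial.X + Polynomial.C c0 :=
    Polynomial.eq_X_add_C_of_natDegree_le_one hq.le
  rw [h2, map_neg, sub_neg_eq_add, mul_add, ← Polynomial.C_mul,
    mul_div_cancel₀ c0 h1]

/-- Lemma 8: let `p` be an odd prime and `G, H` generalized cospectral with
`rank_p W(G) = rank_p W(H) = n - 1`. If the common characteristic polynomial `φ` has no two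
distinct roots mod `p`, then `W(G)x ≡ 0 (mod p)` and `W(H)x ≡ 0 (mod p)` have the same
solutions. -/
theorem stmt12 (n p : ℕ) (hp : p.Prime) (hpodd : Odd p)
    (G H : SimpleGraph (Fin n)) (hGH : genCospectral G H)
    (hrkG : ((walkMat (adjMat n G)).map (Int.cast : ℤ → ZMod p)).rank = n - 1)
    (hrkH : ((walkMat (adjMat n H)).map (Int.cast : ℤ → ZMod p)).rank = n - 1)
    (hroots : ∀ x y : ZMod p,
      ((adjMat n G).charpoly.map (Int.castRingHom (ZMod p))).IsRoot x →
      ((adjMat n G).charpoly.map (Int.castRingHom (ZMod p))).IsRoot y → x = y) :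
    ∀ x : Fin n → ZMod p,
      ((walkMat (adjMat n G)).map (Int.cast : ℤ → ZMod p)) *ᵥ x = 0 ↔
      ((walkMat (adjMat n H)).map (Int.cast : ℤ → ZMod p)) *ᵥ x = 0 := by
  intro x
  rcases Nat.eq_zero_or_pos n with hn | hn
  · subst hn
    constructor <;> intro _ <;> (funext i; exact i.elim0)
  haveI : Fact p.Prime := ⟨hp⟩
  have hcast : (Int.cast : ℤ → ZMod p) = ⇑(Int.castRingHom (ZMod p)) := rfl
  rw [hcast] at hrkG hrkH ⊢
  obtain ⟨gG, hgG0, hgGdeg, hgGdvd, hkerG⟩ :=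
    generator_stuff (adjMat n G) (Int.castRingHom (ZMod p)) hrkG hn
  obtain ⟨gH, hgH0, hgHdeg, hgHdvd, hkerH⟩ :=
    generator_stuff (adjMat n H) (Int.castRingHom (ZMod p)) hrkH hn
  set φ := (adjMat n G).charpoly.map (Int.castRingHom (ZMod p)) with hφ
  have hφH : (adjMat n H).charpoly.map (Int.castRingHom (ZMod p)) = φ := by rw [hφ, hGH.1]
  rw [hφH] at hgHdvd
  have hφmonic : φ.Monic := (Matrix.charpoly_monic _).map _
  have hφdeg : φ.natDegree = n := by
    rw [hφ, ← Matrix.charpoly_map, Matrix.charpoly_natDegree_eq_dim, Fintype.card_fin]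
  obtain ⟨qG, hqG⟩ := hgGdvd
  obtain ⟨qH, hqH⟩ := hgHdvd
  have hqG0 : qG ≠ 0 := by rintro rfl; rw [mul_zero] at hqG; exact hφmonic.ne_zero hqG
  have hqH0 : qH ≠ 0 := by rintro rfl; rw [mul_zero] at hqH; exact hφmonic.ne_zero hqH
  have hqGdeg : qG.natDegree = 1 := by
    have h3 := Polynomial.natDegree_mul hgG0 hqG0
    rw [← hqG, hφdeg, hgGdeg] at h3; omega
  have hqHdeg : qH.natDegree = 1 := by
    have h3 := Polynomial.natDegree_mul hgH0 hqH0
    rw [← hqH, hφdeg, hgHdeg] at h3; omega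
  obtain ⟨cG, aG, hcG, hfG⟩ := deg_one_factor qG hqGdeg
  obtain ⟨cH, aH, hcH, hfH⟩ := deg_one_factor qH hqHdeg
  have hrootG : φ.IsRoot aG := by
    rw [hqG, hfG]; simp [Polynomial.IsRoot]
  have hrootH : φ.IsRoot aH := by
    rw [hqH, hfH]; simp [Polynomial.IsRoot]
  have haa : aG = aH := hroots aG aH hrootG hrootH
  have hEq : gG * Polynomial.C cG = gH * Polynomial.C cH := by
    refine mul_right_cancel₀ (Polynomial.X_sub_C_ne_zero aG) ?_
    have h1 : gG * Polynomial.C cG * (Polynomial.X - Polynomial.C aG) = φ := by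
      rw [hqG, hfG, mul_assoc]
    have h2 : gH * Polynomial.C cH * (Polynomial.X - Polynomial.C aG) = φ := by
      rw [haa, hqH, hfH, mul_assoc]
    rw [h1, h2]
  have hassoc : Associated gG gH := by
    have h1 : Associated gG (gG * Polynomial.C cG) :=
      associated_mul_unit_right _ _ (Polynomial.isUnit_C.mpr (isUnit_iff_ne_zero.mpr hcG))
    have h2 : Associated gH (gH * Polynomial.C cH) :=
      associated_mul_unit_right _ _ (Polynomial.isUnit_C.mpr (isUnit_iff_ne_zero.mpr hcH))
    exact h1.trans (hEq ▸ h2.symm)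
  rw [hkerG x, hkerH x, hassoc.dvd_iff_dvd_left]
end
end

section
/- Let p be an odd prime, let G and H be generalized cospectral simple graphs on n vertices with adjacency matrices A and B, let J be the all-ones matrix, and for an integer t set A_t = A + tJ, B_t = B + tJ, W_t(G) = [e, A_t e, ..., A_t^{n−1} e], W_t(H) = [e, B_t e, ..., B_t^{n−1} e], and φ(x,t) = det(xI − A_t). Suppose rank_p W(G) = rank_p W(H) = n−1 and there is an integer t_0 such that φ(x, t_0) ≡ 0 (mod p) does not have two distinct roots in F_p. Then the linear systems W_{t_0}(G)x ≡ 0 (mod p) and W_{t_0}(H)x ≡ 0 (mod p) have the same set of solutions over F_p. -/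
open Matrix Polynomial
open scoped Classical

noncomputable section

/-- The all-ones matrix `J`. -/
def allOnes (n : ℕ) : Matrix (Fin n) (Fin n) ℤ :=
  Matrix.of fun _ _ => 1



section DetLemma

variable {m : ℕ}

lemma det_add_smul_allOnes_field {K : Type*} [Field K] (M : Matrix (Fin m) (Fin m) K)
    (hM : IsUnit M.det) (c : K) :
    (M + c • (Matrix.of fun _ _ => (1:K))).det
      = M.det + c * ((fun _ => (1:K)) ⬝ᵥ M.adjugate *ᵥ fun _ => (1:K)) := by
  have h1 : (c • (Matrix.of fun _ _ => (1:K)) : Matrix (Fin m) (Fin m) K)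
      = Matrix.replicateCol Unit (fun _ => c) * Matrix.replicateRow Unit (fun _ => (1:K)) := by
    ext i j
    simp [Matrix.mul_apply, Matrix.replicateCol, Matrix.replicateRow]
  rw [h1, Matrix.det_add_replicateCol_mul_replicateRow hM, Matrix.det_unique (n := Unit)]
  simp only [Matrix.add_apply, Matrix.one_apply_eq, Matrix.mul_apply, Matrix.inv_def,
    Matrix.smul_apply, Matrix.replicateRow_apply, Matrix.replicateCol_apply, smul_eq_mul,
    dotProduct, Matrix.mulVec, Finset.mul_sum, Finset.sum_mul, mul_add, mul_one, one_mul]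
  congr 1
  rw [Finset.sum_comm]
  refine Finset.sum_congr rfl fun i _ => Finset.sum_congr rfl fun j _ => ?_
  rw [← mul_assoc, ← mul_assoc, Ring.mul_inverse_cancel _ hM]
  ring

end DetLemma

lemma det_add_smul_allOnes {m : ℕ} {R : Type*} [CommRing R] [IsDomain R]
    (M : Matrix (Fin m) (Fin m) R) (hM : M.det ≠ 0) (c : R) :
    (M + c • (Matrix.of fun _ _ => (1:R))).det
      = M.det + c * ((fun _ => (1:R)) ⬝ᵥ M.adjugate *ᵥ fun _ => (1:R)) := by
  set K := FractionRing R
  set f : R →+* K := algebraMap R K with hfdef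
  have hf : Function.Injective f := IsFractionRing.injective R K
  apply hf
  have hdet : ∀ N : Matrix (Fin m) (Fin m) R, f N.det = (N.map f).det := by
    intro N; rw [← RingHom.mapMatrix_apply, ← RingHom.map_det]
  have hmap : (M + c • (Matrix.of fun _ _ => (1:R))).map f
      = M.map f + f c • (Matrix.of fun _ _ => (1:K)) := by
    ext i j; simp [Matrix.map_apply]
  have hadj : ∀ i j, f (M.adjugate i j) = (M.map f).adjugate i j := by
    intro i j
    have := RingHom.map_adjugate f M
    rw [RingHom.mapMatrix_apply] at this
    rw [show (M.map ⇑f).adjugate = (f.mapMatrix M).adjugate from rfl, ← this]; rfl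
  have hunit : IsUnit (M.map f).det := by
    rw [← hdet]
    exact isUnit_iff_ne_zero.2 fun h => hM (hf (by simpa using h))
  have key := det_add_smul_allOnes_field (M.map f) hunit (f c)
  rw [_root_.map_add, _root_.map_mul, hdet, hdet, hmap, key]
  congr 1
  congr 1
  simp only [dotProduct, Matrix.mulVec, map_sum, _root_.map_mul, _root_.map_one, one_mul, mul_one, hadj]

section GenCharpoly

variable {n : ℕ}

/-- The secondary invariant `e ⬝ᵥ adj(xI - A) *ᵥ e`. -/
def dpoly (A : Matrix (Fin n) (Fin n) ℤ) : ℤ[X] :=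
  (fun _ => (1:ℤ[X])) ⬝ᵥ (charmatrix A).adjugate *ᵥ fun _ => (1:ℤ[X])

lemma charmatrix_add_smul_allOnes (A : Matrix (Fin n) (Fin n) ℤ) (t : ℤ) :
    charmatrix (A + t • allOnes n)
      = charmatrix A + (-(C t) : ℤ[X]) • (Matrix.of fun _ _ => (1:ℤ[X])) := by
  ext i j
  by_cases h : i = j
  · subst h
    simp [charmatrix_apply, allOnes]
    ring
  · simp [charmatrix_apply, allOnes, Matrix.diagonal_apply_ne _ h]
    ring

lemma charpoly_add_smul_allOnes (A : Matrix (Fin n) (Fin n) ℤ) (t : ℤ) :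
    (A + t • allOnes n).charpoly = A.charpoly - C t * dpoly A := by
  rw [Matrix.charpoly, charmatrix_add_smul_allOnes,
    det_add_smul_allOnes _ (A.charpoly_monic.ne_zero) (-(C t))]
  rw [Matrix.charpoly, dpoly]
  ring

end GenCharpoly

section Compl

variable {n : ℕ}

lemma adjMat_compl (G : SimpleGraph (Fin n)) :
    adjMat n Gᶜ = allOnes n - 1 - adjMat n G := by
  ext i j
  by_cases h : i = j
  · subst h
    simp [adjMat, allOnes, SimpleGraph.irrefl]
  · simp [adjMat, allOnes, SimpleGraph.compl_adj, h, Matrix.one_apply_ne h]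
    by_cases hadj : G.Adj i j <;> simp [hadj]

/-- The involutive substitution `X ↦ -1 - X`. -/
def sigmaHom : ℤ[X] →+* ℤ[X] :=
  (Polynomial.aeval (-1 - X : ℤ[X])).toRingHom

lemma sigmaHom_X : sigmaHom X = -1 - X := by
  simp [sigmaHom]

lemma sigmaHom_C (a : ℤ) : sigmaHom (C a) = C a := by
  simp [sigmaHom, aeval_C]

lemma sigmaHom_sigmaHom (q : ℤ[X]) : sigmaHom (sigmaHom q) = q := by
  induction q using Polynomial.induction_on with
  | C a => rw [sigmaHom_C, sigmaHom_C]
  | add p q hp hq => rw [map_add, map_add, hp, hq]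
  | monomial m a ih =>
      have hx : sigmaHom (sigmaHom X) = X := by
        rw [sigmaHom_X, map_sub, map_neg, _root_.map_one, sigmaHom_X]; ring
      rw [_root_.map_mul, _root_.map_mul, sigmaHom_C, _root_.map_pow, _root_.map_pow, hx, sigmaHom_C]

lemma sigmaHom_inj : Function.Injective sigmaHom :=
  Function.LeftInverse.injective sigmaHom_sigmaHom

end Compl

section ComplCharpoly

variable {n : ℕ}

lemma ones_dot_map {k : ℕ} {R S : Type*} [CommRing R] [CommRing S] (f : R →+* S)
    (N : Matrix (Fin k) (Fin k) R) :
    (fun _ => (1:S)) ⬝ᵥ (N.map f) *ᵥ (fun _ => (1:S))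
      = f ((fun _ => (1:R)) ⬝ᵥ N *ᵥ fun _ => (1:R)) := by
  simp [dotProduct, Matrix.mulVec, map_sum]

lemma compl_charpoly (A : Matrix (Fin n) (Fin n) ℤ) :
    (allOnes n - 1 - A).charpoly
      = (-1)^n * sigmaHom A.charpoly - (-1)^(n-1) * sigmaHom (dpoly A) := by
  set PA : Matrix (Fin n) (Fin n) ℤ[X] :=
    ((X : ℤ[X]) + 1) • (1 : Matrix (Fin n) (Fin n) ℤ[X]) + A.map C with hPA
  have h1 : (charmatrix A).map ⇑sigmaHom = -PA := by
    ext i j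
    by_cases h : i = j
    · subst h
      simp [hPA, charmatrix_apply, Matrix.one_apply_eq, map_sub, sigmaHom_X, sigmaHom_C]
      ring
    · simp [hPA, charmatrix_apply, Matrix.diagonal_apply_ne _ h, Matrix.one_apply_ne h,
        sigmaHom_C]
  have hmapdet : ((charmatrix A).map ⇑sigmaHom).det = sigmaHom A.charpoly := by
    rw [show (charmatrix A).map ⇑sigmaHom = sigmaHom.mapMatrix (charmatrix A) from rfl,
      ← RingHom.map_det]
    rfl
  have hdet : PA.det = (-1)^n * sigmaHom A.charpoly := by
    have h2 := Matrix.det_neg PA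
    rw [← h1] at h2
    rw [hmapdet] at h2
    simp only [Fintype.card_fin] at h2
    have : ((-1:ℤ[X])^n) * ((-1:ℤ[X])^n * PA.det) = ((-1:ℤ[X])^n) * sigmaHom A.charpoly := by
      rw [← h2]
    rwa [← mul_assoc, ← pow_add, Even.neg_one_pow ⟨n, by ring⟩, one_mul] at this
  have hadj : (fun _ => (1:ℤ[X])) ⬝ᵥ PA.adjugate *ᵥ (fun _ => (1:ℤ[X]))
      = (-1)^(n-1) * sigmaHom (dpoly A) := by
    have h2 : PA = (-1 : ℤ[X]) • ((charmatrix A).map ⇑sigmaHom) := by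
      rw [h1, neg_smul, one_smul, neg_neg]
    rw [h2, Matrix.adjugate_smul]
    have h3 : ((charmatrix A).map ⇑sigmaHom).adjugate = (charmatrix A).adjugate.map ⇑sigmaHom := by
      rw [← RingHom.mapMatrix_apply, ← RingHom.map_adjugate, RingHom.mapMatrix_apply]
    rw [h3, Matrix.smul_mulVec, dotProduct_smul, smul_eq_mul, Fintype.card_fin,
      ones_dot_map]
    rfl
  have hdetne : PA.det ≠ 0 := by
    rw [hdet]
    intro h
    have : sigmaHom A.charpoly = 0 := by
      rcases mul_eq_zero.1 h with h' | h'
      · exact absurd h' (pow_ne_zero _ (by norm_num))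
      · exact h'
    exact A.charpoly_monic.ne_zero (sigmaHom_inj (by simpa using this))
  have h3 : charmatrix (allOnes n - 1 - A) = PA + (-(1:ℤ[X])) • (Matrix.of fun _ _ => (1:ℤ[X])) := by
    ext i j
    by_cases h : i = j
    · subst h
      simp [hPA, charmatrix_apply, allOnes, Matrix.one_apply_eq]
      ring
    · simp [hPA, charmatrix_apply, allOnes, Matrix.diagonal_apply_ne _ h, Matrix.one_apply_ne h]
      ring
  rw [Matrix.charpoly, h3, det_add_smul_allOnes _ hdetne, hdet, hadj]
  ring

end ComplCharpoly

section Cospectral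

variable {n : ℕ}

lemma dpoly_eq_of_genCospectral {G H : SimpleGraph (Fin n)} (h : genCospectral G H) :
    dpoly (adjMat n G) = dpoly (adjMat n H) := by
  apply sigmaHom_inj
  have hG := compl_charpoly (adjMat n G)
  have hH := compl_charpoly (adjMat n H)
  rw [← adjMat_compl] at hG hH
  have h2 := h.2
  rw [hG, hH, h.1] at h2
  have h3 : ((-1:ℤ[X])^(n-1)) * sigmaHom (dpoly (adjMat n G))
      = ((-1:ℤ[X])^(n-1)) * sigmaHom (dpoly (adjMat n H)) := by
    linear_combination -h2
  exact mul_left_cancel₀ (pow_ne_zero _ (by norm_num)) h3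

lemma gen_charpoly_eq {G H : SimpleGraph (Fin n)} (h : genCospectral G H) (t : ℤ) :
    (adjMat n G + t • allOnes n).charpoly = (adjMat n H + t • allOnes n).charpoly := by
  rw [charpoly_add_smul_allOnes, charpoly_add_smul_allOnes, h.1, dpoly_eq_of_genCospectral h]

end Cospectral

section FieldSide

variable {n : ℕ} {F : Type*} [Field F]

/-- `q ↦ q(M)·e`, as an `F`-linear map. -/
def Phi (M : Matrix (Fin n) (Fin n) F) : F[X] →ₗ[F] (Fin n → F) where
  toFun q := (aeval M q) *ᵥ fun _ => (1:F)
  map_add' q r := by rw [_root_.map_add, Matrix.add_mulVec]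
  map_smul' c q := by
    simp only [RingHom.id_apply]
    rw [_root_.map_smul, Matrix.smul_mulVec]

/-- The ideal of polynomials `q` with `q(M)·e = 0`. -/
def kerIdeal (M : Matrix (Fin n) (Fin n) F) : Ideal F[X] where
  carrier := {q | (aeval M q) *ᵥ (fun _ => (1:F)) = 0}
  zero_mem' := by simp
  add_mem' := by
    intro q r hq hr
    show (aeval M (q + r)) *ᵥ _ = 0
    rw [_root_.map_add, Matrix.add_mulVec, hq, hr, add_zero]
  smul_mem' := by
    intro c q hq
    show (aeval M (c * q)) *ᵥ _ = 0
    rw [_root_.map_mul, ← Matrix.mulVec_mulVec, hq, Matrix.mulVec_zero]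

lemma mem_kerIdeal_iff (M : Matrix (Fin n) (Fin n) F) (q : F[X]) :
    q ∈ kerIdeal M ↔ (aeval M q) *ᵥ (fun _ => (1:F)) = 0 := Iff.rfl

lemma ker_Phi_eq (M : Matrix (Fin n) (Fin n) F) :
    LinearMap.ker (Phi M) = (kerIdeal M).restrictScalars F := by
  ext q; exact Iff.rfl

/-- monic generator of the kernel ideal -/
def genPoly (M : Matrix (Fin n) (Fin n) F) : F[X] :=
  Submodule.IsPrincipal.generator (kerIdeal M)

lemma span_genPoly (M : Matrix (Fin n) (Fin n) F) :
    Ideal.span {genPoly M} = kerIdeal M :=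
  Submodule.IsPrincipal.span_singleton_generator _

lemma mem_kerIdeal_iff_dvd (M : Matrix (Fin n) (Fin n) F) (q : F[X]) :
    q ∈ kerIdeal M ↔ genPoly M ∣ q := by
  rw [← span_genPoly, Ideal.mem_span_singleton]

lemma charpoly_mem_kerIdeal (M : Matrix (Fin n) (Fin n) F) :
    M.charpoly ∈ kerIdeal M := by
  rw [mem_kerIdeal_iff, Matrix.aeval_self_charpoly, Matrix.zero_mulVec]

lemma genPoly_ne_zero (M : Matrix (Fin n) (Fin n) F) : genPoly M ≠ 0 := by
  intro h
  have h2 := (mem_kerIdeal_iff_dvd M M.charpoly).1 (charpoly_mem_kerIdeal M)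
  rw [h, zero_dvd_iff] at h2
  exact M.charpoly_monic.ne_zero h2

lemma finrank_quot_span {g : F[X]} (hg : g ≠ 0) :
    Module.finrank F (F[X] ⧸ (Ideal.span {g} : Ideal F[X])) = g.natDegree :=
  (AdjoinRoot.powerBasis hg).finrank

lemma finrank_range_Phi (M : Matrix (Fin n) (Fin n) F) :
    Module.finrank F (LinearMap.range (Phi M)) = (genPoly M).natDegree := by
  have e1 := (LinearMap.quotKerEquivRange (Phi M)).symm
  rw [LinearEquiv.finrank_eq e1, ker_Phi_eq]
  rw [LinearEquiv.finrank_eq (Submodule.Quotient.restrictScalarsEquiv F (kerIdeal M))]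
  rw [LinearEquiv.finrank_eq
    ((Submodule.quotEquivOfEq _ _ (span_genPoly M).symm).restrictScalars F)]
  exact finrank_quot_span (genPoly_ne_zero M)

end FieldSide

section Krylov

variable {n : ℕ} {F : Type*} [Field F]

/-- Krylov subspace generated by the all-ones vector. -/
def Kry (M : Matrix (Fin n) (Fin n) F) : Submodule F (Fin n → F) :=
  Submodule.span F (Set.range fun k : ℕ => (M ^ k) *ᵥ fun _ => (1:F))

lemma phi_monomial (M : Matrix (Fin n) (Fin n) F) (c : F) (i : ℕ) :
    Phi M (Polynomial.monomial i c) = c • ((M ^ i) *ᵥ fun _ => (1:F)) := by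
  show (aeval M (Polynomial.monomial i c)) *ᵥ _ = _
  rw [← Polynomial.C_mul_X_pow_eq_monomial, _root_.map_mul, _root_.map_pow, aeval_X, aeval_C,
    Algebra.algebraMap_eq_smul_one, smul_mul_assoc, one_mul, Matrix.smul_mulVec]

lemma phi_X_pow (M : Matrix (Fin n) (Fin n) F) (i : ℕ) :
    Phi M (X ^ i) = (M ^ i) *ᵥ fun _ => (1:F) := by
  have := phi_monomial M 1 i
  rw [← Polynomial.C_mul_X_pow_eq_monomial, Polynomial.C_1, one_mul, one_smul] at this
  exact this

lemma range_Phi_eq_Kry (M : Matrix (Fin n) (Fin n) F) :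
    LinearMap.range (Phi M) = Kry M := by
  apply le_antisymm
  · rintro v ⟨q, rfl⟩
    have hq : Phi M q
        = ∑ i ∈ Finset.range (q.natDegree + 1), q.coeff i • ((M ^ i) *ᵥ fun _ => (1:F)) := by
      conv_lhs => rw [Polynomial.as_sum_range' q (q.natDegree + 1) (lt_add_one _)]
      rw [map_sum]
      exact Finset.sum_congr rfl fun i _ => phi_monomial M _ i
    rw [hq]
    exact Submodule.sum_mem _ fun i _ =>
      Submodule.smul_mem _ _ (Submodule.subset_span ⟨i, rfl⟩)
  · rw [Kry, Submodule.span_le]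
    rintro _ ⟨k, rfl⟩
    exact ⟨X ^ k, phi_X_pow M k⟩

lemma mulVec_mem_Kry (M : Matrix (Fin n) (Fin n) F) {v : Fin n → F} (hv : v ∈ Kry M) :
    M *ᵥ v ∈ Kry M := by
  induction hv using Submodule.span_induction with
  | mem x hx =>
      obtain ⟨k, rfl⟩ := hx
      rw [Matrix.mulVec_mulVec, ← pow_succ']
      exact Submodule.subset_span ⟨k + 1, rfl⟩
  | zero => rw [Matrix.mulVec_zero]; exact Submodule.zero_mem _
  | add x y _ _ hx hy => rw [Matrix.mulVec_add]; exact Submodule.add_mem _ hx hy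
  | smul c x _ hx => rw [Matrix.mulVec_smul]; exact Submodule.smul_mem _ _ hx

lemma ones_mem_Kry (M : Matrix (Fin n) (Fin n) F) : (fun _ => (1:F)) ∈ Kry M := by
  have : (fun _ => (1:F)) = (M ^ 0) *ᵥ fun _ => (1:F) := by
    rw [pow_zero, Matrix.one_mulVec]
  rw [this]
  exact Submodule.subset_span ⟨0, rfl⟩

lemma allOnes_mulVec_mem_Kry (M : Matrix (Fin n) (Fin n) F) (v : Fin n → F) :
    (Matrix.of fun _ _ => (1:F)) *ᵥ v ∈ Kry M := by
  have h : (Matrix.of fun _ _ => (1:F) : Matrix (Fin n) (Fin n) F) *ᵥ v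
      = (∑ j, v j) • (fun _ => (1:F) : Fin n → F) := by
    ext i
    simp [Matrix.mulVec, dotProduct]
  rw [h]
  exact Submodule.smul_mem _ _ (ones_mem_Kry M)

lemma Kry_le_add (M : Matrix (Fin n) (Fin n) F) (c : F) :
    Kry (M + c • (Matrix.of fun _ _ => (1:F))) ≤ Kry M := by
  rw [Kry, Submodule.span_le]
  rintro _ ⟨k, rfl⟩
  simp only []
  induction k with
  | zero => rw [pow_zero, Matrix.one_mulVec]; exact ones_mem_Kry M
  | succ k ih =>
      rw [pow_succ', ← Matrix.mulVec_mulVec, Matrix.add_mulVec, Matrix.smul_mulVec]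
      exact Submodule.add_mem _ (mulVec_mem_Kry M ih)
        (Submodule.smul_mem _ _ (allOnes_mulVec_mem_Kry M _))

lemma Kry_add_eq (M : Matrix (Fin n) (Fin n) F) (c : F) :
    Kry (M + c • (Matrix.of fun _ _ => (1:F))) = Kry M := by
  refine le_antisymm (Kry_le_add M c) ?_
  have := Kry_le_add (M + c • (Matrix.of fun _ _ => (1:F))) (-c)
  rw [add_assoc, ← add_smul, add_neg_cancel, zero_smul, add_zero] at this
  exact this

end Krylov

section RankWalk

variable {n : ℕ} {F : Type*} [Field F]

lemma phi_eq_sum (M : Matrix (Fin n) (Fin n) F) (q : F[X]) :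
    Phi M q = ∑ i ∈ Finset.range (q.natDegree + 1),
      q.coeff i • ((M ^ i) *ᵥ fun _ => (1:F)) := by
  conv_lhs => rw [Polynomial.as_sum_range' q (q.natDegree + 1) (lt_add_one _)]
  rw [map_sum]
  exact Finset.sum_congr rfl fun i _ => phi_monomial M _ i

lemma pow_map_int (M0 : Matrix (Fin n) (Fin n) ℤ) (j : ℕ) :
    (M0.map (Int.cast : ℤ → F)) ^ j = (M0 ^ j).map (Int.cast : ℤ → F) := by
  rw [show M0.map (Int.cast : ℤ → F) = (Int.castRingHom F).mapMatrix M0 from rfl, ← map_pow]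
  rfl

lemma walkMat_transpose_col (M0 : Matrix (Fin n) (Fin n) ℤ) (j : Fin n) :
    ((walkMat M0).map (Int.cast : ℤ → F))ᵀ j
      = ((M0.map (Int.cast : ℤ → F)) ^ (j:ℕ)) *ᵥ fun _ => (1:F) := by
  ext i
  rw [pow_map_int]
  simp [walkMat, Matrix.mulVec, dotProduct, Matrix.map_apply]

lemma rank_walkMat (M0 : Matrix (Fin n) (Fin n) ℤ) :
    ((walkMat M0).map (Int.cast : ℤ → F)).rank
      = Module.finrank F (LinearMap.range (Phi (M0.map (Int.cast : ℤ → F)))) := by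
  set M' := M0.map (Int.cast : ℤ → F) with hM'
  have hspan : Submodule.span F (Set.range ((walkMat M0).map (Int.cast : ℤ → F))ᵀ)
      = LinearMap.range (Phi M') := by
    apply le_antisymm
    · rw [Submodule.span_le]
      rintro _ ⟨j, rfl⟩
      rw [walkMat_transpose_col, range_Phi_eq_Kry]
      exact Submodule.subset_span ⟨(j:ℕ), rfl⟩
    · rintro v ⟨q, rfl⟩
      set χ := M'.charpoly with hχ
      have hmo : χ.Monic := M'.charpoly_monic
      have hphi : Phi M' q = Phi M' (q %ₘ χ) := by
        conv_lhs => rw [← Polynomial.modByMonic_add_div q χ]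
        rw [map_add]
        have hz : Phi M' (χ * (q /ₘ χ)) = 0 := by
          show (aeval M' (χ * (q /ₘ χ))) *ᵥ _ = 0
          rw [_root_.map_mul, Matrix.aeval_self_charpoly, zero_mul, Matrix.zero_mulVec]
        rw [hz, add_zero]
      rw [hphi]
      set r := q %ₘ χ with hr
      by_cases hr0 : r = 0
      · rw [hr0, map_zero]
        exact Submodule.zero_mem _
      · have hdeg : r.natDegree < n := by
          have h1 : r.degree < χ.degree := Polynomial.degree_modByMonic_lt q hmo
          have h2 : χ.natDegree = n := by
            rw [hχ, Matrix.charpoly_natDegree_eq_dim, Fintype.card_fin]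
          have := Polynomial.natDegree_lt_natDegree hr0 h1
          omega
        rw [phi_eq_sum]
        apply Submodule.sum_mem
        intro i hi
        apply Submodule.smul_mem
        apply Submodule.subset_span
        refine ⟨⟨i, ?_⟩, ?_⟩
        · have := Finset.mem_range.1 hi
          omega
        · rw [walkMat_transpose_col]
  rw [Matrix.rank, Matrix.range_mulVecLin]
  exact congrArg (fun S : Submodule F (Fin n → F) => Module.finrank F S) hspan

end RankWalk

section Final

variable {n : ℕ} {F : Type*} [Field F]

lemma walk_mulVec_s13 (M0 : Matrix (Fin n) (Fin n) ℤ) (x : Fin n → F) :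
    ((walkMat M0).map (Int.cast : ℤ → F)) *ᵥ x
      = Phi (M0.map (Int.cast : ℤ → F)) (∑ j : Fin n, Polynomial.monomial (j:ℕ) (x j)) := by
  rw [map_sum]
  ext i
  rw [Finset.sum_apply]
  have h1 : ∀ j : Fin n, (Phi (M0.map (Int.cast : ℤ → F)) (Polynomial.monomial (j:ℕ) (x j))) i
      = x j * ((((M0.map (Int.cast : ℤ → F)) ^ (j:ℕ)) *ᵥ fun _ => (1:F)) i) := by
    intro j
    rw [phi_monomial]
    rfl
  simp only [h1]
  rw [Matrix.mulVec, dotProduct]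
  refine Finset.sum_congr rfl fun j _ => ?_
  have h2 := congrFun (walkMat_transpose_col (F := F) M0 j) i
  rw [Matrix.transpose_apply] at h2
  rw [h2, mul_comm]

lemma map_shift (M0 : Matrix (Fin n) (Fin n) ℤ) (t : ℤ) :
    (M0 + t • allOnes n).map (Int.cast : ℤ → F)
      = M0.map (Int.cast : ℤ → F) + ((t : F)) • (Matrix.of fun _ _ => (1:F)) := by
  ext i j
  simp [Matrix.map_apply, allOnes]

lemma natDegree_genPoly_shift (M0 : Matrix (Fin n) (Fin n) ℤ) (t : ℤ)
    (hrk : ((walkMat M0).map (Int.cast : ℤ → F)).rank = n - 1) :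
    (genPoly ((M0 + t • allOnes n).map (Int.cast : ℤ → F))).natDegree = n - 1 := by
  rw [← finrank_range_Phi, range_Phi_eq_Kry, map_shift, Kry_add_eq, ← range_Phi_eq_Kry,
    ← rank_walkMat, hrk]

end Final

set_option maxHeartbeats 1000000 in
/-- Corollary 3: let `p` be an odd prime, `G, H` generalized cospectral with
`rank_p W(G) = rank_p W(H) = n - 1`, and `t₀` an integer such that `φ(x,t₀) = det(xI - A - t₀J)`
has no two distinct roots mod `p`. Then `W_{t₀}(G)x ≡ 0 (mod p)` and `W_{t₀}(H)x ≡ 0 (mod p)`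
have the same solutions. -/
theorem stmt13 (n p : ℕ) (hp : p.Prime) (hpodd : Odd p)
    (G H : SimpleGraph (Fin n)) (hGH : genCospectral G H)
    (hrkG : ((walkMat (adjMat n G)).map (Int.cast : ℤ → ZMod p)).rank = n - 1)
    (hrkH : ((walkMat (adjMat n H)).map (Int.cast : ℤ → ZMod p)).rank = n - 1)
    (t₀ : ℤ)
    (hroots : ∀ x y : ZMod p,
      ((adjMat n G + t₀ • allOnes n).charpoly.map (Int.castRingHom (ZMod p))).IsRoot x →
      ((adjMat n G + t₀ • allOnes n).charpoly.map (Int.castRingHom (ZMod p))).IsRoot y →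
      x = y) :
    ∀ x : Fin n → ZMod p,
      ((walkMat (adjMat n G + t₀ • allOnes n)).map (Int.cast : ℤ → ZMod p)) *ᵥ x = 0 ↔
      ((walkMat (adjMat n H + t₀ • allOnes n)).map (Int.cast : ℤ → ZMod p)) *ᵥ x = 0 := by
  haveI : Fact p.Prime := ⟨hp⟩
  intro x
  rcases Nat.eq_zero_or_pos n with hn | hn
  · subst hn
    constructor <;> intro _ <;> exact funext fun i => i.elim0
  set A : Matrix (Fin n) (Fin n) ℤ := adjMat n G with hA
  set B : Matrix (Fin n) (Fin n) ℤ := adjMat n H with hB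
  set A' : Matrix (Fin n) (Fin n) (ZMod p) :=
    (A + t₀ • allOnes n).map (Int.cast : ℤ → ZMod p) with hA'
  set B' : Matrix (Fin n) (Fin n) (ZMod p) :=
    (B + t₀ • allOnes n).map (Int.cast : ℤ → ZMod p) with hB'
  -- characteristic polynomials agree
  have hcpA : A'.charpoly = ((A + t₀ • allOnes n).charpoly).map (Int.castRingHom (ZMod p)) := by
    have h0 : A' = (A + t₀ • allOnes n).map ⇑(Int.castRingHom (ZMod p)) := rfl
    rw [h0, Matrix.charpoly_map]
  have hcpB : B'.charpoly = ((B + t₀ • allOnes n).charpoly).map (Int.castRingHom (ZMod p)) := by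
    have h0 : B' = (B + t₀ • allOnes n).map ⇑(Int.castRingHom (ZMod p)) := rfl
    rw [h0, Matrix.charpoly_map]
  have hχeq : A'.charpoly = B'.charpoly := by
    rw [hcpA, hcpB, gen_charpoly_eq hGH t₀]
  -- degrees of the generators
  have hgA : (genPoly A').natDegree = n - 1 := natDegree_genPoly_shift A t₀ hrkG
  have hgB : (genPoly B').natDegree = n - 1 := natDegree_genPoly_shift B t₀ hrkH
  obtain ⟨cA, hcAeq⟩ := (mem_kerIdeal_iff_dvd A' _).1 (charpoly_mem_kerIdeal A')
  obtain ⟨cB, hcBeq⟩ := (mem_kerIdeal_iff_dvd B' _).1 (charpoly_mem_kerIdeal B')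
  have hχnA : A'.charpoly.natDegree = n := by
    rw [Matrix.charpoly_natDegree_eq_dim, Fintype.card_fin]
  have hχnB : B'.charpoly.natDegree = n := by
    rw [Matrix.charpoly_natDegree_eq_dim, Fintype.card_fin]
  have hχ0A : A'.charpoly ≠ 0 := A'.charpoly_monic.ne_zero
  have hχ0B : B'.charpoly ≠ 0 := B'.charpoly_monic.ne_zero
  have hgA0 : genPoly A' ≠ 0 := genPoly_ne_zero _
  have hgB0 : genPoly B' ≠ 0 := genPoly_ne_zero _
  have hcA0 : cA ≠ 0 := fun h => hχ0A (by rw [hcAeq, h, mul_zero])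
  have hcB0 : cB ≠ 0 := fun h => hχ0B (by rw [hcBeq, h, mul_zero])
  have hdegA : cA.natDegree = 1 := by
    have h1 := Polynomial.natDegree_mul hgA0 hcA0
    rw [← hcAeq, hχnA, hgA] at h1
    omega
  have hdegB : cB.natDegree = 1 := by
    have h1 := Polynomial.natDegree_mul hgB0 hcB0
    rw [← hcBeq, hχnB, hgB] at h1
    omega
  have hc1A : cA.coeff 1 ≠ 0 := by
    have h1 := Polynomial.leadingCoeff_ne_zero.2 hcA0
    rwa [Polynomial.leadingCoeff, hdegA] at h1
  have hc1B : cB.coeff 1 ≠ 0 := by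
    have h1 := Polynomial.leadingCoeff_ne_zero.2 hcB0
    rwa [Polynomial.leadingCoeff, hdegB] at h1
  have hformA : cA = C (cA.coeff 1) * X + C (cA.coeff 0) :=
    Polynomial.eq_X_add_C_of_natDegree_le_one (le_of_eq hdegA)
  have hformB : cB = C (cB.coeff 1) * X + C (cB.coeff 0) :=
    Polynomial.eq_X_add_C_of_natDegree_le_one (le_of_eq hdegB)
  set aA : ZMod p := -(cA.coeff 0) / (cA.coeff 1) with haA
  set aB : ZMod p := -(cB.coeff 0) / (cB.coeff 1) with haB
  have hrootA : cA.eval aA = 0 := by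
    conv_lhs => rw [hformA]
    simp only [Polynomial.eval_add, Polynomial.eval_mul, Polynomial.eval_C, Polynomial.eval_X]
    rw [haA]
    field_simp
    ring
  have hrootB : cB.eval aB = 0 := by
    conv_lhs => rw [hformB]
    simp only [Polynomial.eval_add, Polynomial.eval_mul, Polynomial.eval_C, Polynomial.eval_X]
    rw [haB]
    field_simp
    ring
  have hrootχA :
      (((adjMat n G + t₀ • allOnes n)).charpoly.map (Int.castRingHom (ZMod p))).IsRoot aA := by
    rw [← hA, ← hcpA]
    show A'.charpoly.eval aA = 0
    rw [hcAeq, Polynomial.eval_mul, hrootA, mul_zero]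
  have hrootχB :
      (((adjMat n G + t₀ • allOnes n)).charpoly.map (Int.castRingHom (ZMod p))).IsRoot aB := by
    rw [← hA, ← hcpA]
    show A'.charpoly.eval aB = 0
    rw [hχeq, hcBeq, Polynomial.eval_mul, hrootB, mul_zero]
  have haAB : aA = aB := hroots aA aB hrootχA hrootχB
  have hfacA : cA = C (cA.coeff 1) * (X - C aA) := by
    have h0 : cA.coeff 1 * aA + cA.coeff 0 = 0 := by
      have h1 := hrootA
      rw [hformA] at h1
      simpa using h1
    have h2 : cA.coeff 0 = -(cA.coeff 1 * aA) := by linear_combination h0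
    conv_lhs => rw [hformA]
    rw [h2, map_neg, _root_.map_mul]
    ring
  have hfacB : cB = C (cB.coeff 1) * (X - C aB) := by
    have h0 : cB.coeff 1 * aB + cB.coeff 0 = 0 := by
      have h1 := hrootB
      rw [hformB] at h1
      simpa using h1
    have h2 : cB.coeff 0 = -(cB.coeff 1 * aB) := by linear_combination h0
    conv_lhs => rw [hformB]
    rw [h2, map_neg, _root_.map_mul]
    ring
  have hkey : genPoly A' * C (cA.coeff 1) = genPoly B' * C (cB.coeff 1) := by
    apply mul_right_cancel₀ (Polynomial.X_sub_C_ne_zero aA)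
    calc genPoly A' * C (cA.coeff 1) * (X - C aA)
        = genPoly A' * (C (cA.coeff 1) * (X - C aA)) := by ring
      _ = genPoly A' * cA := by rw [← hfacA]
      _ = A'.charpoly := hcAeq.symm
      _ = genPoly B' * cB := by rw [hχeq, hcBeq]
      _ = genPoly B' * (C (cB.coeff 1) * (X - C aB)) := by rw [← hfacB]
      _ = genPoly B' * C (cB.coeff 1) * (X - C aA) := by rw [haAB]; ring
  have hdvd1 : genPoly A' ∣ genPoly B' := by
    have h1 : genPoly A' ∣ genPoly B' * C (cB.coeff 1) := ⟨C (cA.coeff 1), hkey.symm⟩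
    exact (((Polynomial.isUnit_C).2 (isUnit_iff_ne_zero.2 hc1B)).dvd_mul_right).1 h1
  have hdvd2 : genPoly B' ∣ genPoly A' := by
    have h1 : genPoly B' ∣ genPoly A' * C (cA.coeff 1) := ⟨C (cB.coeff 1), hkey⟩
    exact (((Polynomial.isUnit_C).2 (isUnit_iff_ne_zero.2 hc1A)).dvd_mul_right).1 h1
  have hker : kerIdeal A' = kerIdeal B' := by
    rw [← span_genPoly A', ← span_genPoly B']
    exact Ideal.span_singleton_eq_span_singleton.2 (associated_of_dvd_dvd hdvd1 hdvd2)
  rw [walk_mulVec_s13, walk_mulVec_s13]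
  constructor
  · intro h
    have hm : (∑ j : Fin n, Polynomial.monomial (j:ℕ) (x j)) ∈ kerIdeal A' := h
    rw [hker] at hm
    exact hm
  · intro h
    have hm : (∑ j : Fin n, Polynomial.monomial (j:ℕ) (x j)) ∈ kerIdeal B' := h
    rw [← hker] at hm
    exact hm
end
end

section
/- Let p be an odd prime and let G be a simple graph on n vertices with adjacency matrix A, det W(G) ≠ 0 and rank_p W(G) = n−1. Let Q ∈ Q(G) with level ℓ and suppose p | ℓ. For an integer t set φ(x,t) = det(xI − A − tJ), where J is the all-ones matrix. Then there exists an integer t_0 such that φ(x, t_0) ≡ 0 (mod p) does not have two distinct roots in F_p. -/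
open Matrix Polynomial
open scoped Classical

noncomputable section

section Helpers

variable {n : ℕ} {K : Type*} [Field K]

lemma sumMulVec {ι : Type*} (s : Finset ι) (f : ι → Matrix (Fin n) (Fin n) K) (v : Fin n → K) :
    (∑ i ∈ s, f i) *ᵥ v = ∑ i ∈ s, (f i *ᵥ v) := by
  induction s using Finset.cons_induction with
  | empty => simp [Matrix.zero_mulVec]
  | cons a s ha ih => rw [Finset.sum_cons, Finset.sum_cons, Matrix.add_mulVec, ih]

lemma sumDot {ι : Type*} (s : Finset ι) (f : ι → (Fin n → K)) (v : Fin n → K) :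
    (∑ i ∈ s, f i) ⬝ᵥ v = ∑ i ∈ s, (f i ⬝ᵥ v) := by
  induction s using Finset.cons_induction with
  | empty => simp
  | cons a s ha ih => rw [Finset.sum_cons, Finset.sum_cons, add_dotProduct, ih]

lemma symDot (M : Matrix (Fin n) (Fin n) K) (hM : Mᵀ = M) (v w : Fin n → K) :
    (M *ᵥ v) ⬝ᵥ w = v ⬝ᵥ (M *ᵥ w) := by
  rw [Matrix.dotProduct_mulVec, ← Matrix.mulVec_transpose, hM]

lemma cayley (B : Matrix (Fin n) (Fin n) K) :
    B ^ n = ∑ i ∈ Finset.range n, (-(B.charpoly.coeff i)) • B ^ i := by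
  have hd : B.charpoly.natDegree = n := by
    simp [B.charpoly_natDegree_eq_dim]
  have hc : B.charpoly.coeff n = 1 := by
    simpa [hd] using B.charpoly_monic.coeff_natDegree
  have h0 := B.aeval_self_charpoly
  rw [Polynomial.aeval_eq_sum_range, hd, Finset.sum_range_succ, hc, one_smul] at h0
  have h1 : B ^ n = -∑ i ∈ Finset.range n, B.charpoly.coeff i • B ^ i :=
    eq_neg_of_add_eq_zero_right h0
  rw [h1, ← Finset.sum_neg_distrib]
  exact Finset.sum_congr rfl fun i _ => (neg_smul _ _).symm

/-- The walk matrix over a general field. -/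
def walkK (B : Matrix (Fin n) (Fin n) K) : Matrix (Fin n) (Fin n) K :=
  Matrix.of fun i j : Fin n => ((B ^ (j : ℕ)) *ᵥ fun _ => (1 : K)) i

/-- Main linear-algebra lemma: if the walk matrix of a symmetric matrix `B` has rank `n-1`,
then there is a single scalar `lam` such that every eigenvector of `B` orthogonal to the
all-ones vector has eigenvalue `lam`. -/
lemma exists_lam (hn : 1 ≤ n) (B : Matrix (Fin n) (Fin n) K) (hB : Bᵀ = B)
    (hr : (walkK B).rank = n - 1) :
    ∃ lam : K, ∀ (μ : K) (u : Fin n → K), u ≠ 0 → B *ᵥ u = μ • u →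
      (fun _ => (1 : K)) ⬝ᵥ u = 0 → μ = lam := by
  set e : Fin n → K := fun _ => 1 with he
  set L := Matrix.mulVecLin ((walkK B)ᵀ) with hL
  have hker : ∀ u : Fin n → K, u ∈ LinearMap.ker L ↔
      ∀ j : Fin n, ((B ^ (j : ℕ)) *ᵥ e) ⬝ᵥ u = 0 := by
    intro u
    rw [LinearMap.mem_ker, hL, Matrix.mulVecLin_apply, funext_iff]
    refine forall_congr' fun j => ?_
    simp only [Matrix.mulVec, dotProduct, Matrix.transpose_apply, walkK, Matrix.of_apply,
      Pi.zero_apply, he]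
  -- dimension of the kernel is 1
  have hfr : Module.finrank K (LinearMap.ker L) = 1 := by
    have h2 := LinearMap.finrank_range_add_finrank_ker L
    have h3 : Module.finrank K (Fin n → K) = n := by simp
    have h4 : Module.finrank K (LinearMap.range L) = n - 1 := by
      rw [hL]
      show ((walkK B)ᵀ).rank = n - 1
      rw [Matrix.rank_transpose]; exact hr
    omega
  obtain ⟨v₀K, hv₀K0, hv₀Ksp⟩ := finrank_eq_one_iff'.mp hfr
  set v₀ : Fin n → K := (v₀K : Fin n → K) with hv₀
  have hv₀ne : v₀ ≠ 0 := fun h => hv₀K0 (Subtype.ext h)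
  have hcov : ∀ u : Fin n → K, u ∈ LinearMap.ker L → ∃ c : K, c • v₀ = u := by
    intro u hu
    obtain ⟨c, hc⟩ := hv₀Ksp ⟨u, hu⟩
    exact ⟨c, congrArg Subtype.val hc⟩
  -- all walk dot products vanish on the kernel (for all powers, via Cayley-Hamilton)
  have hdall : ∀ (j : ℕ) (u : Fin n → K), u ∈ LinearMap.ker L →
      ((B ^ j) *ᵥ e) ⬝ᵥ u = 0 := by
    intro j
    induction j using Nat.strong_induction_on with
    | _ j ih =>
      intro u hu
      by_cases hj : j < n
      · exact (hker u).mp hu ⟨j, hj⟩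
      · push_neg at hj
        obtain ⟨m, rfl⟩ : ∃ m, j = m + n := ⟨j - n, by omega⟩
        have hpow : (B ^ (m + n)) = ∑ i ∈ Finset.range n,
            (-(B.charpoly.coeff i)) • B ^ (m + i) := by
          rw [pow_add, cayley B, Finset.mul_sum]
          exact Finset.sum_congr rfl fun i _ => by rw [mul_smul_comm, ← pow_add]
        rw [hpow, sumMulVec, sumDot]
        refine Finset.sum_eq_zero fun i hi => ?_
        rw [Matrix.smul_mulVec, smul_dotProduct,
          ih (m + i) (by have := Finset.mem_range.mp hi; omega) u hu, smul_zero]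
  -- the kernel is invariant under B
  have hBstep : ∀ u : Fin n → K, u ∈ LinearMap.ker L → B *ᵥ u ∈ LinearMap.ker L := by
    intro u hu
    rw [hker]
    intro j
    have hsym : ((B ^ (j : ℕ)) *ᵥ e) ⬝ᵥ (B *ᵥ u) = (B *ᵥ ((B ^ (j : ℕ)) *ᵥ e)) ⬝ᵥ u := by
      rw [symDot B hB]
    rw [hsym, Matrix.mulVec_mulVec, ← pow_succ']
    exact hdall _ u hu
  have hv₀mem : v₀K.1 ∈ LinearMap.ker L := v₀K.2
  obtain ⟨lam, hlam⟩ := hcov (B *ᵥ v₀) (hBstep v₀ hv₀mem)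
  refine ⟨lam, fun μ u hu0 huB hue => ?_⟩
  -- u is in the kernel
  have hupow : ∀ k : ℕ, (B ^ k) *ᵥ u = (μ ^ k) • u := by
    intro k
    induction k with
    | zero => simp
    | succ k ihk =>
      rw [pow_succ', ← Matrix.mulVec_mulVec, ihk, Matrix.mulVec_smul, huB, smul_smul, ← pow_succ]
  have humem : u ∈ LinearMap.ker L := by
    rw [hker]
    intro j
    rw [symDot _ (by rw [Matrix.transpose_pow, hB]) e u, hupow, dotProduct_smul,
      hue, smul_zero]
  obtain ⟨c, hc⟩ := hcov u humem
  have hc0 : c ≠ 0 := by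
    rintro rfl
    exact hu0 (by rw [← hc, zero_smul])
  -- compare eigenvalues
  have h1 : μ • c • v₀ = c • lam • v₀ := by
    have h0 : B *ᵥ u = B *ᵥ (c • v₀) := by rw [hc]
    rw [huB, Matrix.mulVec_smul, ← hlam, ← hc] at h0
    exact h0
  obtain ⟨i, hi⟩ := Function.ne_iff.mp hv₀ne
  have h2 := congrFun h1 i
  simp only [Pi.smul_apply, smul_eq_mul] at h2
  have h3 : μ * (c * v₀ i) = lam * (c * v₀ i) := by rw [h2]; ring
  exact mul_right_cancel₀ (mul_ne_zero hc0 hi) h3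

/-- `detD Ap μ t` says that `μ` is a root of `det (x I - Ap - t J)` over `K`. -/
def detD (Ap : Matrix (Fin n) (Fin n) K) (μ t : K) : Prop :=
  (μ • (1 : Matrix (Fin n) (Fin n) K) - Ap - t • Matrix.of (fun _ _ : Fin n => (1 : K))).det = 0

lemma jp_mulVec (u : Fin n → K) :
    (Matrix.of (fun _ _ : Fin n => (1 : K))) *ᵥ u
      = ((fun _ => (1 : K)) ⬝ᵥ u) • (fun _ => (1 : K)) := by
  ext i
  simp [Matrix.mulVec, dotProduct]

/-- For `μ` which is not the distinguished scalar `lam`, there is at most one `t` with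
`det (μ I - Ap - t J) = 0`. -/
lemma uniq_t (Ap : Matrix (Fin n) (Fin n) K) (hA : Apᵀ = Ap) (lam : K)
    (hlam : ∀ (μ : K) (u : Fin n → K), u ≠ 0 → Ap *ᵥ u = μ • u →
      (fun _ => (1 : K)) ⬝ᵥ u = 0 → μ = lam)
    (μ : K) (hμ : μ ≠ lam) (t₁ t₂ : K) (h₁ : detD Ap μ t₁) (h₂ : detD Ap μ t₂) :
    t₁ = t₂ := by
  by_contra hne
  set e : Fin n → K := fun _ => 1 with he
  set B : Matrix (Fin n) (Fin n) K := μ • 1 - Ap with hBdef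
  have hBT : Bᵀ = B := by
    rw [hBdef, Matrix.transpose_sub, Matrix.transpose_smul, Matrix.transpose_one, hA]
  -- extract kernel vectors
  have hget : ∀ t : K, detD Ap μ t → ∃ u : Fin n → K, u ≠ 0 ∧
      B *ᵥ u = (t * (e ⬝ᵥ u)) • e := by
    intro t ht
    obtain ⟨u, hu0, hu⟩ := (Matrix.exists_mulVec_eq_zero_iff).mpr ht
    refine ⟨u, hu0, ?_⟩
    have : (B - t • Matrix.of (fun _ _ : Fin n => (1 : K))) *ᵥ u = 0 := hu
    rw [Matrix.sub_mulVec, Matrix.smul_mulVec, jp_mulVec, sub_eq_zero] at this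
    rw [this, smul_smul]
  obtain ⟨u₁, hu₁0, hu₁⟩ := hget t₁ h₁
  obtain ⟨u₂, hu₂0, hu₂⟩ := hget t₂ h₂
  -- an eigenvector orthogonal to e would contradict hμ
  have hnoeig : ∀ u : Fin n → K, u ≠ 0 → B *ᵥ u = 0 → e ⬝ᵥ u ≠ 0 := by
    intro u hu0 hBu heu
    apply hμ
    refine hlam μ u hu0 ?_ heu
    rw [hBdef, Matrix.sub_mulVec, Matrix.smul_mulVec, Matrix.one_mulVec,
      sub_eq_zero] at hBu
    exact hBu.symm
  set a₁ : K := e ⬝ᵥ u₁ with ha₁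
  set a₂ : K := e ⬝ᵥ u₂ with ha₂
  by_cases h₁0 : a₁ = 0
  · exact hnoeig u₁ hu₁0 (by rw [hu₁, h₁0, mul_zero, zero_smul]) h₁0
  by_cases h₂0 : a₂ = 0
  · exact hnoeig u₂ hu₂0 (by rw [hu₂, h₂0, mul_zero, zero_smul]) h₂0
  -- construct a contradiction
  set z : Fin n → K := a₁⁻¹ • u₁ - a₂⁻¹ • u₂ with hz
  have hBz : B *ᵥ z = (t₁ - t₂) • e := by
    rw [hz, Matrix.mulVec_sub, Matrix.mulVec_smul, Matrix.mulVec_smul, hu₁, hu₂,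
      smul_smul, smul_smul, ← sub_smul]
    congr 1
    field_simp
  have hez : e ⬝ᵥ z = 0 := by
    rw [hz, dotProduct_sub, dotProduct_smul, dotProduct_smul,
      ← ha₁, ← ha₂]
    rw [smul_eq_mul, smul_eq_mul, inv_mul_cancel₀ h₁0, inv_mul_cancel₀ h₂0, sub_self]
  set d : K := t₁ - t₂ with hd
  have hd0 : d ≠ 0 := sub_ne_zero_of_ne hne
  set y : Fin n → K := u₁ - (t₁ * a₁ * d⁻¹) • z with hy
  have hBy : B *ᵥ y = 0 := by
    rw [hy, Matrix.mulVec_sub, Matrix.mulVec_smul, hu₁, hBz, smul_smul, ← sub_smul]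
    have hs : t₁ * a₁ - t₁ * a₁ * d⁻¹ * d = 0 := by field_simp; ring
    rw [hs, zero_smul]
  have hey : e ⬝ᵥ y = a₁ := by
    rw [hy, dotProduct_sub, dotProduct_smul, hez, smul_zero, sub_zero, ha₁]
  have hkey : d * a₁ = 0 := by
    have h5 : (B *ᵥ z) ⬝ᵥ y = z ⬝ᵥ (B *ᵥ y) := symDot B hBT z y
    rw [hBz, hBy, dotProduct_zero, smul_dotProduct, hey] at h5
    exact h5
  rcases mul_eq_zero.mp hkey with h | h
  · exact hd0 h
  · exact h₁0 h

lemma evalCharpoly (P : Matrix (Fin n) (Fin n) K) (x : K) :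
    P.charpoly.eval x = (x • (1 : Matrix (Fin n) (Fin n) K) - P).det := by
  show Polynomial.eval x (Matrix.charmatrix P).det = _
  rw [← Polynomial.coe_evalRingHom, RingHom.map_det]
  congr 1
  ext i j
  by_cases h : i = j
  · subst h
    simp [Matrix.charmatrix_apply_eq, Matrix.map_apply, Matrix.smul_apply, Matrix.one_apply_eq]
  · simp [Matrix.charmatrix_apply_ne _ _ _ h, Matrix.map_apply, Matrix.smul_apply,
      Matrix.one_apply_ne h]

lemma map_walkMatK (A : Matrix (Fin n) (Fin n) ℤ) :
    (walkMat A).map (Int.cast : ℤ → K) = walkK (A.map (Int.cast : ℤ → K)) := by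
  ext i j
  show (Int.castRingHom K) ((walkMat A) i j) = _
  have h1 : (A ^ (j : ℕ)).map (Int.cast : ℤ → K) = (A.map (Int.cast : ℤ → K)) ^ (j : ℕ) := by
    simpa using (map_pow ((Int.castRingHom K).mapMatrix) A (j : ℕ))
  have h2 : ((Int.castRingHom K) ∘ fun _ : Fin n => (1 : ℤ)) = fun _ : Fin n => (1 : K) := by
    funext k; simp
  show (Int.castRingHom K) (((A ^ (j : ℕ)) *ᵥ fun _ => (1 : ℤ)) i) = _
  rw [RingHom.map_mulVec, h2]
  show ((A ^ (j : ℕ)).map (Int.cast : ℤ → K) *ᵥ fun _ => (1 : K)) i = _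
  rw [h1]
  rfl

end Helpers

/-- Lemma 9: let `p` be an odd prime, `det W(G) ≠ 0`,
`rank_p W(G) = n - 1`, and `Q ∈ Q(G)` with level `ℓ` divisible by `p`. Then there is an integer
`t₀` such that `φ(x,t₀) = det(xI - A - t₀J)` has no two distinct roots mod `p`. -/
theorem stmt14 (n p : ℕ) (hp : p.Prime) (hpodd : Odd p)
    (G : SimpleGraph (Fin n))
    (hdet : (walkMat (adjMat n G)).det ≠ 0)
    (hrank : ((walkMat (adjMat n G)).map (Int.cast : ℤ → ZMod p)).rank = n - 1)
    (Q : Matrix (Fin n) (Fin n) ℚ) (hQ : inQSet (adjMat n G) Q)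
    (ℓ : ℕ) (hℓ : IsLevel Q ℓ) (hpl : p ∣ ℓ) :
    ∃ t₀ : ℤ, ∀ x y : ZMod p,
      ((adjMat n G + t₀ • allOnes n).charpoly.map (Int.castRingHom (ZMod p))).IsRoot x →
      ((adjMat n G + t₀ • allOnes n).charpoly.map (Int.castRingHom (ZMod p))).IsRoot y →
      x = y := by
  haveI : Fact p.Prime := ⟨hp⟩
  haveI : NeZero p := ⟨hp.pos.ne'⟩
  rcases Nat.eq_zero_or_pos n with hn0 | hn
  · subst hn0
    refine ⟨0, fun x y hx hy => ?_⟩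
    exfalso
    have h1 : (adjMat 0 G + (0 : ℤ) • allOnes 0).charpoly = 1 := by
      unfold Matrix.charpoly
      exact Matrix.det_isEmpty
    rw [h1, Polynomial.map_one] at hx
    simpa [Polynomial.IsRoot] using hx
  · set Ap : Matrix (Fin n) (Fin n) (ZMod p) := (adjMat n G).map (Int.cast : ℤ → ZMod p)
      with hApdef
    have hAsym : (adjMat n G)ᵀ = adjMat n G := by
      ext i j
      simp only [Matrix.transpose_apply, adjMat, Matrix.of_apply]
      rw [SimpleGraph.adj_comm]
    have hApT : Apᵀ = Ap := by
      ext i j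
      simp only [Matrix.transpose_apply, hApdef, Matrix.map_apply]
      rw [show adjMat n G j i = adjMat n G i j from congrFun (congrFun hAsym i) j]
    have hrkK : (walkK Ap).rank = n - 1 := by
      rw [hApdef, ← map_walkMatK]
      exact hrank
    obtain ⟨lam, hlam⟩ := exists_lam hn Ap hApT hrkK
    -- counting argument: find a `t` avoiding all bad values
    set T : ZMod p → ZMod p := fun μ => if h : ∃ t, detD Ap μ t then h.choose else 0 with hT
    have hTspec : ∀ μ : ZMod p, (∃ t, detD Ap μ t) → detD Ap μ (T μ) := by
      intro μ h
      show detD Ap μ (dite _ _ _)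
      rw [dif_pos h]
      exact h.choose_spec
    have hcard : ((Finset.univ.erase lam).image T).card < Fintype.card (ZMod p) := by
      calc ((Finset.univ.erase lam).image T).card
          ≤ (Finset.univ.erase lam).card := Finset.card_image_le
        _ < Finset.univ.card := Finset.card_erase_lt_of_mem (Finset.mem_univ lam)
        _ = Fintype.card (ZMod p) := Finset.card_univ
    obtain ⟨tf, htf⟩ : ∃ tf : ZMod p, tf ∉ (Finset.univ.erase lam).image T := by
      by_contra hcon
      push_neg at hcon
      have h6 : (Finset.univ.erase lam).image T = Finset.univ :=
        Finset.eq_univ_iff_forall.mpr hcon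
      rw [h6, Finset.card_univ] at hcard
      exact lt_irrefl _ hcard
    refine ⟨(tf.val : ℤ), fun x y hx hy => ?_⟩
    -- identify the reduction of the shifted adjacency matrix
    have hNp : (adjMat n G + (tf.val : ℤ) • allOnes n).map (Int.cast : ℤ → ZMod p)
        = Ap + tf • Matrix.of (fun _ _ : Fin n => (1 : ZMod p)) := by
      ext i j
      simp only [Matrix.map_apply, Matrix.add_apply, Matrix.smul_apply, allOnes,
        Matrix.of_apply, smul_eq_mul, mul_one, hApdef]
      push_cast
      rw [ZMod.natCast_rightInverse tf]
    have hroot : ∀ w : ZMod p,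
        ((adjMat n G + (tf.val : ℤ) • allOnes n).charpoly.map (Int.castRingHom (ZMod p))).IsRoot w
        → detD Ap w tf := by
      intro w hw
      rw [← Matrix.charpoly_map, Int.coe_castRingHom, hNp] at hw
      rw [Polynomial.IsRoot, evalCharpoly] at hw
      show (w • (1 : Matrix (Fin n) (Fin n) (ZMod p)) - Ap
        - tf • Matrix.of (fun _ _ : Fin n => (1 : ZMod p))).det = 0
      rw [sub_sub]
      exact hw
    have hfin : ∀ w : ZMod p, detD Ap w tf → w = lam := by
      intro w hw
      by_contra hne
      have hex : ∃ t, detD Ap w t := ⟨tf, hw⟩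
      have h1 : detD Ap w (T w) := hTspec w hex
      have h2 : T w = tf := uniq_t Ap hApT lam hlam w hne (T w) tf h1 hw
      exact htf (Finset.mem_image.mpr ⟨w, Finset.mem_erase.mpr ⟨hne, Finset.mem_univ w⟩, h2⟩)
    rw [hfin x (hroot x hx), hfin y (hroot y hy)]
end
end

section
/- Let G be a simple graph on n vertices with adjacency matrix A and complement Ḡ, let J be the all-ones n×n matrix, and let φ(G,x) = det(xI − A) and φ(Ḡ,x) = det(xI − A(Ḡ)). Then for every t, det(xI − A − tJ) = (1+t)·φ(G,x) − (−1)^n · t · φ(Ḡ, −1−x), as an identity of polynomials in x. -/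
open Matrix Polynomial
open scoped Classical

noncomputable section

lemma det_add_smul_ones {R : Type*} [CommRing R] {n : ℕ}
    (B : Matrix (Fin n) (Fin n) R) (t : R) :
    (B + t • Matrix.of fun (_ _ : Fin n) => (1:R)).det
      = B.det + t * ∑ i : Fin n, (B.updateRow i fun _ => 1).det := by
  classical
  set v : Fin n → R := fun _ => (1:R) with hv
  set f := (Matrix.detRowAlternating : (Fin n → R) [⋀^Fin n]→ₗ[R] R) with hf
  have key : (B + t • Matrix.of fun (_ _ : Fin n) => (1:R)).det
      = ∑ s : Finset (Fin n), f (s.piecewise (fun _ => t • v) fun i => B i) := by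
    have h1 := f.toMultilinearMap.map_add_univ (fun _ : Fin n => t • v) (fun i => B i)
    have h2 : ((fun _ : Fin n => t • v) + fun i => B i)
        = fun i => (B + t • Matrix.of fun (_ _ : Fin n) => (1:R)) i := by
      ext i j
      simp [v, Matrix.add_apply, Matrix.smul_apply, add_comm]
    rw [h2] at h1
    exact h1
  rw [key]
  set S : Finset (Finset (Fin n)) :=
    insert ∅ (Finset.univ.image fun i : Fin n => ({i} : Finset (Fin n))) with hS
  have hvanish : ∀ s ∈ (Finset.univ : Finset (Finset (Fin n))), s ∉ S →
      f (s.piecewise (fun _ => t • v) fun i => B i) = 0 := by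
    intro s _ hs
    simp only [hS, Finset.mem_insert, Finset.mem_image, Finset.mem_univ, true_and,
      not_or, not_exists] at hs
    have hcard : 1 < s.card := by
      rcases Nat.lt_or_ge 1 s.card with h | h
      · exact h
      · exfalso
        interval_cases h' : s.card
        · exact hs.1 (Finset.card_eq_zero.mp h')
        · obtain ⟨a, ha⟩ := Finset.card_eq_one.mp h'
          exact hs.2 a ha.symm
    obtain ⟨a, ha, b, hb, hab⟩ := Finset.one_lt_card.mp hcard
    refine f.map_eq_zero_of_eq _ ?_ hab
    rw [Finset.piecewise_eq_of_mem _ _ _ ha, Finset.piecewise_eq_of_mem _ _ _ hb]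
  rw [← Finset.sum_subset (Finset.subset_univ S) hvanish, hS,
    Finset.sum_insert (by simp), Finset.sum_image (by intro a _ b _ h; exact Finset.singleton_injective h)]
  rw [Finset.piecewise_empty]
  have h0 : f (fun i => B i) = B.det := rfl
  rw [h0]
  congr 1
  rw [Finset.mul_sum]
  refine Finset.sum_congr rfl fun i _ => ?_
  rw [Finset.piecewise_singleton]
  have := f.map_update_smul (fun i => B i) i t v
  rw [this]
  rfl

/-- `det(xI - A - tJ) = (1+t)·φ(G,x) - (-1)ⁿ·t·φ(Ḡ,-1-x)` as polynomials. -/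
theorem stmt15 (n : ℕ) (G : SimpleGraph (Fin n)) (t : ℤ) :
    (adjMat n G + t • allOnes n).charpoly =
      Polynomial.C (1 + t) * (adjMat n G).charpoly -
      Polynomial.C ((-1) ^ n * t) *
        ((adjMat n Gᶜ).charpoly.comp (-1 - Polynomial.X)) := by
  set A := adjMat n G with hA
  set SS : ℤ[X] := ∑ i : Fin n, ((Matrix.charmatrix A).updateRow i fun _ => 1).det with hSS
  -- charpoly of A + s•J is affine in s
  have hkey : ∀ s : ℤ, (A + s • allOnes n).charpoly = A.charpoly + (-(Polynomial.C s)) * SS := by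
    intro s
    have hchm : Matrix.charmatrix (A + s • allOnes n)
        = Matrix.charmatrix A
          + (-(Polynomial.C s : ℤ[X])) • Matrix.of fun (_ _ : Fin n) => (1:ℤ[X]) := by
      ext i j
      by_cases h : i = j
      · subst h
        simp [Matrix.charmatrix_apply_eq, Matrix.add_apply, Matrix.smul_apply, allOnes, map_add]
        ring
      · simp [Matrix.charmatrix_apply_ne _ _ _ h, Matrix.add_apply, Matrix.smul_apply, allOnes,
          map_add]
        ring
    rw [Matrix.charpoly, hchm, det_add_smul_ones, ← hSS, ← Matrix.charpoly]
  -- the complement side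
  have hcompl : adjMat n Gᶜ = allOnes n - 1 - A := by
    ext i j
    by_cases h : i = j
    · subst h
      simp [adjMat, allOnes, SimpleGraph.irrefl, Matrix.one_apply, hA]
    · simp [adjMat, allOnes, SimpleGraph.compl_adj, h, Matrix.one_apply_ne h, hA]
      by_cases hAd : G.Adj i j <;> simp [hAd]
  have hcomp : (adjMat n Gᶜ).charpoly.comp (-1 - Polynomial.X)
      = (-1 : ℤ[X]) ^ n * (A + (-1 : ℤ) • allOnes n).charpoly := by
    have h1 : (adjMat n Gᶜ).charpoly.comp (-1 - Polynomial.X)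
        = ((Polynomial.eval₂RingHom Polynomial.C
            (-1 - Polynomial.X)).mapMatrix (Matrix.charmatrix (adjMat n Gᶜ))).det := by
      rw [Matrix.charpoly, ← RingHom.map_det]
      rfl
    have h2 : ∀ M : Matrix (Fin n) (Fin n) ℤ,
        (Polynomial.eval₂RingHom Polynomial.C
            (-1 - Polynomial.X)).mapMatrix (Matrix.charmatrix M)
          = -(Matrix.charmatrix (-1 - M)) := by
      intro M
      refine Matrix.ext fun i j => ?_
      by_cases h : i = j
      · subst h
        simp only [RingHom.mapMatrix_apply, Matrix.map_apply, Matrix.charmatrix_apply_eq,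
          Polynomial.coe_eval₂RingHom, Polynomial.eval₂_sub, Polynomial.eval₂_X,
          Polynomial.eval₂_C, Matrix.neg_apply, Matrix.sub_apply, Matrix.one_apply_eq,
          map_sub, map_neg, Polynomial.C_1]
        ring
      · simp only [RingHom.mapMatrix_apply, Matrix.map_apply,
          Matrix.charmatrix_apply_ne _ _ _ h, Polynomial.coe_eval₂RingHom,
          Polynomial.eval₂_neg, Polynomial.eval₂_C, Matrix.neg_apply, Matrix.sub_apply,
          Matrix.one_apply_ne h, map_neg, map_sub, neg_zero, zero_sub, neg_neg]
    have h3 : (-1 : Matrix (Fin n) (Fin n) ℤ) - adjMat n Gᶜ = A + (-1 : ℤ) • allOnes n := by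
      rw [hcompl, neg_one_smul ℤ (allOnes n)]; abel
    rw [h1, h2, h3, Matrix.det_neg, Fintype.card_fin, ← Matrix.charpoly]
  rw [hkey t, hcomp, hkey (-1)]
  have hC : (Polynomial.C ((-1 : ℤ) ^ n * t) : ℤ[X]) = (-1 : ℤ[X]) ^ n * Polynomial.C t := by
    rw [Polynomial.C_mul, _root_.map_pow]
    norm_num
  have hCneg : (Polynomial.C (-1 : ℤ) : ℤ[X]) = -1 := by norm_num
  have hnn : ((-1 : ℤ[X]) ^ n) * ((-1 : ℤ[X]) ^ n) = 1 := by
    rw [← mul_pow]; norm_num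
  rw [hC, Polynomial.C_add, Polynomial.C_1, hCneg]
  linear_combination (Polynomial.C t * (A.charpoly + SS)) * hnn
end
end

section
/- Let G be a simple graph on n vertices with characteristic polynomial φ(x) = x^n + c_1 x^{n−1} + ··· + c_{n−1} x + c_n. Then c_i is even whenever i is odd. -/
open Matrix Polynomial
open scoped Classical

noncomputable section

namespace Stmt17Aux

variable {R : Type*} [CommRing R]

/-- The ring hom `p ↦ p.comp (-X)`. -/
noncomputable def negXcomp : R[X] →+* R[X] := Polynomial.eval₂RingHom Polynomial.C (-X)

lemma negXcomp_apply (p : R[X]) : negXcomp p = p.comp (-X) := rfl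

lemma coeff_comp_negX (p : R[X]) (k : ℕ) :
    (p.comp (-X)).coeff k = (-1) ^ k * p.coeff k := by
  induction p using Polynomial.induction_on' with
  | add p q hp hq => simp [add_comp, hp, hq, mul_add]
  | monomial m a =>
      have hmc : (monomial m a).comp (-X) = monomial m ((-1) ^ m * a) := by
        rw [Polynomial.monomial_comp]
        have : (-X : R[X]) ^ m = C ((-1 : R) ^ m) * X ^ m := by
          rw [neg_pow]
          simp [mul_comm]
        rw [this, ← mul_assoc, ← C_mul, mul_comm a, ← C_mul_X_pow_eq_monomial,
          C_mul_X_pow_eq_monomial]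
      rw [hmc, coeff_monomial, coeff_monomial]
      rcases eq_or_ne m k with rfl | h
      · simp
      · simp [h, Ne.symm h]

/-- Skew-symmetric matrix has charpoly satisfying `p(-X) = (-1)^n p(X)`. -/
lemma charpoly_comp_negX {n : ℕ} (S : Matrix (Fin n) (Fin n) ℤ) (hS : Sᵀ = -S) :
    S.charpoly.comp (-X) = (-1) ^ n * S.charpoly := by
  have hdiag : ∀ i, S i i = 0 := by
    intro i
    have := congrFun (congrFun hS i) i
    simp only [transpose_apply, Matrix.neg_apply] at this
    linarith
  have h1 : (charmatrix S).map (negXcomp (R := ℤ)) = -(charmatrix (-S)) := by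
    apply Matrix.ext
    intro i j
    rcases eq_or_ne i j with rfl | h
    · simp only [Matrix.map_apply, charmatrix_apply_eq, Matrix.neg_apply, Matrix.neg_apply,
        negXcomp_apply, sub_comp, X_comp, C_comp]
      rw [C_neg]
      ring
    · simp only [Matrix.map_apply, charmatrix_apply_ne _ _ _ h, Matrix.neg_apply,
        negXcomp_apply, neg_comp, C_comp]
      simp [C_neg]
  have h2 : charmatrix (-S) = (charmatrix S)ᵀ := by
    apply Matrix.ext
    intro i j
    rcases eq_or_ne i j with rfl | h
    · simp [charmatrix_apply_eq, hdiag]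
    · have hji : S j i = -S i j := by
        have := congrFun (congrFun hS i) j
        simpa [transpose_apply] using this
      simp [transpose_apply, charmatrix_apply_ne _ _ _ h,
        charmatrix_apply_ne _ _ _ (Ne.symm h), hji]
  calc S.charpoly.comp (-X) = negXcomp S.charpoly := rfl
    _ = ((charmatrix S).map (negXcomp (R := ℤ))).det := by
        rw [Matrix.charpoly, RingHom.map_det, RingHom.mapMatrix_apply]
    _ = (-(charmatrix (-S))).det := by rw [h1]
    _ = (-1) ^ n * (charmatrix (-S)).det := by
        rw [Matrix.det_neg]; simp
    _ = (-1) ^ n * S.charpoly := by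
        rw [h2, Matrix.det_transpose, Matrix.charpoly]

end Stmt17Aux

/-- Lemma 11: writing the characteristic polynomial of `G` as
`xⁿ + c₁x^{n-1} + ⋯ + cₙ`, the coefficient `cᵢ` (the coefficient of `x^{n-i}`) is even
whenever `i` is odd. -/
theorem stmt17 (n : ℕ) (G : SimpleGraph (Fin n)) (i : ℕ) (hi : i ≤ n) (hiodd : Odd i) :
    Even ((adjMat n G).charpoly.coeff (n - i)) := by
  set A := adjMat n G with hA
  -- the skew-symmetric lift
  set S : Matrix (Fin n) (Fin n) ℤ :=
    Matrix.of (fun i j => if (i : ℕ) < (j : ℕ) then A i j else -A i j) with hSdef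
  have hAsymm : ∀ a b, A a b = A b a := by
    intro a b; simp [hA, adjMat, SimpleGraph.adj_comm]
  have hAdiag : ∀ a, A a a = 0 := by
    intro a; simp [hA, adjMat]
  have hS : Sᵀ = -S := by
    ext a b
    simp only [transpose_apply, hSdef, Matrix.of_apply, Matrix.neg_apply]
    rcases lt_trichotomy (a : ℕ) (b : ℕ) with h | h | h
    · rw [if_neg (by omega), if_pos h, hAsymm b a]
    · have : a = b := Fin.ext h
      subst this
      simp [hAdiag]
    · rw [if_pos h, if_neg (by omega), neg_neg, hAsymm b a]
  -- S and A agree mod 2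
  have hmap : A.map (Int.cast : ℤ → ZMod 2) = S.map (Int.cast : ℤ → ZMod 2) := by
    ext a b
    by_cases hab : (a : ℕ) < (b : ℕ)
    · simp only [Matrix.map_apply, hSdef, Matrix.of_apply, if_pos hab]
    · simp only [Matrix.map_apply, hSdef, Matrix.of_apply, if_neg hab, Int.cast_neg]
      exact (CharTwo.neg_eq _).symm
  -- hence their charpolys agree mod 2
  have hcp : A.charpoly.map (Int.castRingHom (ZMod 2)) =
      S.charpoly.map (Int.castRingHom (ZMod 2)) := by
    rw [← Matrix.charpoly_map, ← Matrix.charpoly_map, show A.map ⇑(Int.castRingHom (ZMod 2)) = S.map ⇑(Int.castRingHom (ZMod 2)) from hmap]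
  -- the relevant coefficient of S.charpoly is 0
  have hkey := Stmt17Aux.charpoly_comp_negX S hS
  have hc : (-1 : ℤ) ^ (n - i) * S.charpoly.coeff (n - i) =
      (-1 : ℤ) ^ n * S.charpoly.coeff (n - i) := by
    have h := congrArg (fun p => p.coeff (n - i)) hkey
    rw [Stmt17Aux.coeff_comp_negX] at h
    rw [show ((-1 : ℤ[X])) ^ n = C ((-1 : ℤ) ^ n) by simp, coeff_C_mul] at h
    exact h
  have hsign : (-1 : ℤ) ^ n = -(-1 : ℤ) ^ (n - i) := by
    have hn : (n - i) + i = n := by omega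
    conv_lhs => rw [← hn]
    rw [pow_add, hiodd.neg_one_pow, mul_neg_one]
  have hSzero : S.charpoly.coeff (n - i) = 0 := by
    rw [hsign] at hc
    have h2 : (-1 : ℤ) ^ (n - i) * S.charpoly.coeff (n - i) = 0 := by linarith
    rcases mul_eq_zero.mp h2 with h | h
    · exact absurd h (pow_ne_zero _ (by norm_num))
    · exact h
  -- conclude evenness
  have hmod : ((A.charpoly.coeff (n - i) : ℤ) : ZMod 2) = 0 := by
    have h := congrArg (fun p => p.coeff (n - i)) hcp
    simp only [Polynomial.coeff_map] at h
    rw [hSzero] at h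
    simpa using h
  have hdvd := (ZMod.intCast_zmod_eq_zero_iff_dvd _ 2).mp hmod
  exact even_iff_two_dvd.mpr hdvd
end
end

section
/- Let G be a simple graph on n vertices with adjacency matrix A and characteristic polynomial φ(x) = x^n + c_1 x^{n−1} + ··· + c_{n−1}x + c_n. Define M = A^{⌈n/2⌉} + c_2 A^{⌈(n−2)/2⌉} + ··· + c_{n−2}A + c_n I if n is even, and M = A^{⌈n/2⌉} + c_2 A^{⌈(n−2)/2⌉} + ··· + c_{n−3}A² + c_{n−1}A if n is odd. Then Me ≡ 0 (mod 2), i.e., every entry of Me is even. -/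
open Matrix Polynomial
open scoped Classical

noncomputable section

/-- Given the coefficients `c i` of the characteristic polynomial, the matrix
`M = A^{⌈n/2⌉} + c₂A^{⌈(n-2)/2⌉} + ⋯ + c_{n-2}A + cₙI` when `n` is even (resp.
`M = A^{⌈n/2⌉} + c₂A^{⌈(n-2)/2⌉} + ⋯ + c_{n-3}A² + c_{n-1}A` when `n` is odd): the `j`-th
summand is `c_{2j} • A^{⌈(n-2j)/2⌉}` for `j = 0, 1, …, ⌊n/2⌋` (with `c₀ = 1`). -/
def Mhalf {n : ℕ} (A : Matrix (Fin n) (Fin n) ℤ) (c : ℕ → ℤ) : Matrix (Fin n) (Fin n) ℤ :=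
  ∑ j ∈ Finset.range (n / 2 + 1), c (2 * j) • A ^ ((n - 2 * j + 1) / 2)

/-- Splitting a sum over `range (n+1)` into terms of index of the same parity as `n`
and the opposite parity. -/
lemma split_sum {M : Type*} [AddCommMonoid M] (n : ℕ) (f : ℕ → M) :
    ∑ i ∈ Finset.range (n + 1), f i
      = (∑ j ∈ Finset.range (n / 2 + 1), f (n - 2 * j))
        + ∑ j ∈ Finset.range ((n + 1) / 2), f (n - 2 * j - 1) := by
  induction n with
  | zero => simp
  | succ n ih =>
      rw [Finset.sum_range_succ, ih]
      have hE : ∑ j ∈ Finset.range ((n + 1) / 2 + 1), f (n + 1 - 2 * j)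
          = (∑ j ∈ Finset.range ((n + 1) / 2), f (n - 2 * j - 1)) + f (n + 1) := by
        rw [Finset.sum_range_succ']
        congr 1
        apply Finset.sum_congr rfl
        intro j _
        have h : n + 1 - 2 * (j + 1) = n - 2 * j - 1 := by omega
        rw [h]
      have hO : ∑ j ∈ Finset.range ((n + 1 + 1) / 2), f (n + 1 - 2 * j - 1)
          = ∑ j ∈ Finset.range (n / 2 + 1), f (n - 2 * j) := by
        have h2 : (n + 1 + 1) / 2 = n / 2 + 1 := by omega
        rw [h2]
        apply Finset.sum_congr rfl
        intro j _
        have h : n + 1 - 2 * j - 1 = n - 2 * j := by omega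
        rw [h]
      rw [hE, hO]
      abel

/-- The key polynomial identity over `𝔽₂`. -/
lemma key_identity (n : ℕ) (p : Polynomial (ZMod 2)) (hp : p.natDegree ≤ n) :
    (∑ j ∈ Finset.range (n / 2 + 1), C (p.coeff (n - 2 * j)) * X ^ ((n - 2 * j + 1) / 2)) ^ 2
      = X ^ (n % 2) * p
        + X * (∑ j ∈ Finset.range ((n + 1) / 2),
            C (p.coeff (n - 2 * j - 1)) * X ^ ((n - 2 * j - 1) / 2)) ^ 2 := by
  have hsq : ∀ a : ZMod 2, a * a = a := by decide
  have hXp : X ^ (n % 2) * p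
      = ∑ i ∈ Finset.range (n + 1), C (p.coeff i) * X ^ (i + n % 2) := by
    conv_lhs => rw [p.as_sum_range' (n + 1) (by omega)]
    rw [Finset.mul_sum]
    apply Finset.sum_congr rfl
    intro i _
    rw [← C_mul_X_pow_eq_monomial]
    ring
  have hEv : (∑ j ∈ Finset.range (n / 2 + 1),
        C (p.coeff (n - 2 * j)) * X ^ ((n - 2 * j + 1) / 2)) ^ 2
      = ∑ j ∈ Finset.range (n / 2 + 1), C (p.coeff (n - 2 * j)) * X ^ (n - 2 * j + n % 2) := by
    rw [CharTwo.sum_sq]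
    apply Finset.sum_congr rfl
    intro j hj
    rw [Finset.mem_range] at hj
    have he : n - 2 * j + n % 2 = (n - 2 * j + 1) / 2 * 2 := by omega
    rw [he, mul_pow, ← C_pow, ← pow_mul, sq, hsq]
  have hOd : X * (∑ j ∈ Finset.range ((n + 1) / 2),
        C (p.coeff (n - 2 * j - 1)) * X ^ ((n - 2 * j - 1) / 2)) ^ 2
      = ∑ j ∈ Finset.range ((n + 1) / 2),
          C (p.coeff (n - 2 * j - 1)) * X ^ (n - 2 * j - 1 + n % 2) := by
    rw [CharTwo.sum_sq, Finset.mul_sum]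
    apply Finset.sum_congr rfl
    intro j hj
    rw [Finset.mem_range] at hj
    have he : n - 2 * j - 1 + n % 2 = (n - 2 * j - 1) / 2 * 2 + 1 := by omega
    rw [he, mul_pow, ← C_pow, ← pow_mul, sq, hsq, pow_succ]
    ring
  rw [hEv, hOd, hXp, split_sum n (fun i => C (p.coeff i) * X ^ (i + n % 2)), add_assoc,
    CharTwo.add_self_eq_zero, add_zero]

/-- Lemma 12: for the matrix `M` built from the even-indexed coefficients of
the characteristic polynomial of `G`, we have `Me ≡ 0 (mod 2)`. -/
theorem stmt18 (n : ℕ) (G : SimpleGraph (Fin n)) :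
    ∀ k, (2 : ℤ) ∣
      ((Mhalf (adjMat n G) (fun i => (adjMat n G).charpoly.coeff (n - i))) *ᵥ
        fun _ => (1 : ℤ)) k := by
  intro k
  set A := adjMat n G with hA
  set B : Matrix (Fin n) (Fin n) (ZMod 2) :=
    A.map (⇑(Int.castRingHom (ZMod 2))) with hB
  set p : Polynomial (ZMod 2) := B.charpoly with hp
  -- basic facts
  have hsqr : ∀ a : ZMod 2, a * a = a := by decide
  have hself : ∀ a : ZMod 2, a + a = 0 := by decide
  have hBs : ∀ i j, B i j = B j i := by
    intro i j
    simp only [hB, hA, map_apply, adjMat, of_apply]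
    rw [SimpleGraph.adj_comm]
  have hBsymm : Bᵀ = B := by
    ext i j; rw [Matrix.transpose_apply, hBs]
  have hBdiag : ∀ i, B i i = 0 := by
    intro i
    simp [hB, hA, adjMat]
  have hpdeg : p.natDegree ≤ n := by
    rw [hp, Matrix.charpoly_natDegree_eq_dim, Fintype.card_fin]
  -- the polynomials q, r and matrices M, L over ZMod 2
  set q : Polynomial (ZMod 2) :=
    ∑ j ∈ Finset.range (n / 2 + 1), C (p.coeff (n - 2 * j)) * X ^ ((n - 2 * j + 1) / 2) with hq
  set r : Polynomial (ZMod 2) :=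
    ∑ j ∈ Finset.range ((n + 1) / 2),
      C (p.coeff (n - 2 * j - 1)) * X ^ ((n - 2 * j - 1) / 2) with hr
  set M : Matrix (Fin n) (Fin n) (ZMod 2) := aeval B q with hM
  set L : Matrix (Fin n) (Fin n) (ZMod 2) := aeval B r with hL
  have haev : ∀ (s : Finset ℕ) (a : ℕ → ZMod 2) (e : ℕ → ℕ),
      (aeval B) (∑ j ∈ s, C (a j) * X ^ (e j)) = ∑ j ∈ s, a j • B ^ (e j) := by
    intro s a e
    rw [map_sum]
    apply Finset.sum_congr rfl
    intro j _
    rw [_root_.map_mul, aeval_C, aeval_X_pow, Algebra.algebraMap_eq_smul_one, smul_mul_assoc,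
      one_mul]
  -- M * M = L * B * L
  have hMML : M * M = L * B * L := by
    have hiden : q ^ 2 = X ^ (n % 2) * p + r * X * r := by
      rw [hq, key_identity n p hpdeg, ← hr]
      ring
    rw [hM, hL, ← _root_.map_mul, ← sq, hiden, map_add, _root_.map_mul, _root_.map_mul,
      _root_.map_mul, map_pow, aeval_X, hp, Matrix.aeval_self_charpoly, mul_zero, zero_add]
  -- symmetry of M and L entrywise
  have hsymmOf : ∀ f : Polynomial (ZMod 2), ((aeval B) f)ᵀ = (aeval B) f := by
    intro f
    induction f using Polynomial.induction_on' with
    | add f g hf hg => rw [map_add, Matrix.transpose_add, hf, hg]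
    | monomial m a =>
        rw [← C_mul_X_pow_eq_monomial, _root_.map_mul, aeval_C, aeval_X_pow,
          Algebra.algebraMap_eq_smul_one, smul_mul_assoc, one_mul, Matrix.transpose_smul,
          Matrix.transpose_pow, hBsymm]
  have hMs : ∀ i j, M i j = M j i := by
    intro i j
    have h := congrFun (congrFun (hsymmOf q) i) j
    rw [Matrix.transpose_apply] at h
    exact h.symm
  have hLs : ∀ i j, L i j = L j i := by
    intro i j
    have h := congrFun (congrFun (hsymmOf r) i) j
    rw [Matrix.transpose_apply] at h
    exact h.symm
  -- (L * B * L) i i = 0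
  have hLBL : ∀ i, (L * B * L) i i = 0 := by
    intro i
    have expand : (L * B * L) i i
        = ∑ x ∈ (Finset.univ ×ˢ Finset.univ : Finset (Fin n × Fin n)),
            L i x.1 * B x.1 x.2 * L i x.2 := by
      have h1 : (L * B * L) i i = ∑ x2, ∑ x1, L i x1 * B x1 x2 * L i x2 := by
        rw [Matrix.mul_apply]
        apply Finset.sum_congr rfl
        intro x2 _
        rw [Matrix.mul_apply, Finset.sum_mul]
        apply Finset.sum_congr rfl
        intro x1 _
        rw [hLs x2 i]
      rw [h1, Finset.sum_product]
      exact Finset.sum_comm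
    rw [expand]
    apply Finset.sum_ninvolution Prod.swap
    · intro a
      have h1 : B a.2 a.1 = B a.1 a.2 := hBs a.2 a.1
      have h2 : L i a.2 * B a.2 a.1 * L i a.1 = L i a.1 * B a.1 a.2 * L i a.2 := by
        rw [h1]; ring
      show L i a.1 * B a.1 a.2 * L i a.2 + L i a.2 * B a.2 a.1 * L i a.1 = 0
      rw [h2, hself]
    · intro a hne heq
      apply hne
      have h12 : a.2 = a.1 := congrArg Prod.fst heq
      rw [← h12, hBdiag, mul_zero, zero_mul]
    · intro a; simp
    · intro a; rfl
  -- every row sum of M is zero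
  have hMe : ∀ i, ∑ j, M i j = 0 := by
    intro i
    have h1 : ∑ j, M i j = (M * M) i i := by
      rw [Matrix.mul_apply]
      apply Finset.sum_congr rfl
      intro j _
      rw [hMs i j]
      rw [hsqr (M j i)]
    rw [h1, hMML, hLBL]
  -- transfer back to ℤ
  have hApow : ∀ e : ℕ, (A ^ e).map (⇑(Int.castRingHom (ZMod 2))) = B ^ e := by
    intro e
    rw [hB, ← RingHom.mapMatrix_apply, ← RingHom.mapMatrix_apply, map_pow]
  have hcoeff : ∀ m : ℕ, ((Int.castRingHom (ZMod 2)) (A.charpoly.coeff m)) = p.coeff m := by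
    intro m
    rw [hp, hB, Matrix.charpoly_map, Polynomial.coeff_map]
  have hMentry : ∀ j', ((Int.castRingHom (ZMod 2))
      ((Mhalf A fun i => A.charpoly.coeff (n - i)) k j')) = M k j' := by
    intro j'
    rw [hM, hq, haev, Mhalf]
    rw [Matrix.sum_apply, map_sum, Matrix.sum_apply]
    apply Finset.sum_congr rfl
    intro j _
    rw [Matrix.smul_apply, Matrix.smul_apply, smul_eq_mul, smul_eq_mul, _root_.map_mul,
      hcoeff, ← hApow, Matrix.map_apply]
  rw [show (2 : ℤ) = ((2 : ℕ) : ℤ) by norm_num, ← ZMod.intCast_zmod_eq_zero_iff_dvd]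
  have hcast : (((((Mhalf A fun i => A.charpoly.coeff (n - i)) *ᵥ fun _ => (1 : ℤ)) k : ℤ))
      : ZMod 2) = ∑ j, M k j := by
    rw [Matrix.mulVec, dotProduct]
    push_cast
    apply Finset.sum_congr rfl
    intro j _
    rw [mul_one, ← hMentry j]
    rfl
  rw [hcast, hMe]
end
end

section
/- Let G and H be generalized cospectral simple graphs on n vertices with adjacency matrices A and B and common characteristic polynomial x^n + c_1 x^{n−1} + ··· + c_n. Define M(G) = A^{⌈n/2⌉} + c_2 A^{⌈(n−2)/2⌉} + ··· + c_{n−2}A + c_n I if n is even (respectively M(G) = A^{⌈n/2⌉} + c_2 A^{⌈(n−2)/2⌉} + ··· + c_{n−3}A² + c_{n−1}A if n is odd), and define M(H) in the same way using B. Then M(G)e ≡ 0 (mod 2) and M(H)e ≡ 0 (mod 2). -/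
open Matrix Polynomial
open scoped Classical

noncomputable section

namespace Stmt19Aux

lemma z2_add_self (x : ZMod 2) : x + x = 0 := by revert x; decide

lemma z2_mul_self (x : ZMod 2) : x * x = x := by revert x; decide

variable {n : ℕ}

/-- The quadratic form of a symmetric zero-diagonal matrix over `ZMod 2` vanishes. -/
lemma quad (S : Matrix (Fin n) (Fin n) (ZMod 2)) (hs : Sᵀ = S) (hd : ∀ i, S i i = 0)
    (v : Fin n → ZMod 2) : ∑ j, ∑ k, S j k * (v j * v k) = 0 := by
  rw [← Finset.sum_product' (s := Finset.univ) (t := Finset.univ)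
    (f := fun j k => S j k * (v j * v k))]
  refine Finset.sum_ninvolution Prod.swap ?_ ?_ (fun a => Finset.mem_univ _) ?_
  · intro a
    have h1 : S a.2 a.1 = S a.1 a.2 := by
      nth_rewrite 1 [← hs]
      rw [Matrix.transpose_apply]
    simp only [Prod.swap]
    rw [h1, show v a.2 * v a.1 = v a.1 * v a.2 from mul_comm _ _]
    exact z2_add_self _
  · intro a hfa hswap
    apply hfa
    have h12 : a.1 = a.2 := congrArg Prod.snd hswap
    show S a.1 a.2 * (v a.1 * v a.2) = 0
    rw [h12, hd, zero_mul]
  · intro a; exact Prod.swap_swap a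

lemma pow_symm (S : Matrix (Fin n) (Fin n) (ZMod 2)) (hs : Sᵀ = S) (m : ℕ) :
    (S ^ m)ᵀ = S ^ m := by
  rw [Matrix.transpose_pow, hs]

lemma diag_odd_pow (S : Matrix (Fin n) (Fin n) (ZMod 2)) (hs : Sᵀ = S) (hd : ∀ i, S i i = 0)
    (m : ℕ) (i : Fin n) : (S ^ (2 * m + 1)) i i = 0 := by
  have hp : S ^ (2 * m + 1) = S ^ m * S * S ^ m := by
    rw [show 2 * m + 1 = m + 1 + m by omega, pow_add, pow_succ]
  have hv : ∀ k, (S ^ m) k i = (S ^ m) i k := by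
    intro k
    nth_rewrite 1 [← pow_symm S hs m]
    rw [Matrix.transpose_apply]
  rw [hp]
  calc (S ^ m * S * S ^ m) i i
      = ∑ x, ∑ j, (S ^ m) i j * S j x * (S ^ m) x i := by
        simp [Matrix.mul_apply, Finset.sum_mul]
    _ = ∑ j, ∑ x, S j x * ((fun t => (S ^ m) i t) j * (fun t => (S ^ m) i t) x) := by
        rw [Finset.sum_comm]
        refine Finset.sum_congr rfl fun j _ => Finset.sum_congr rfl fun x _ => ?_
        rw [hv x]
        ring
    _ = 0 := quad S hs hd _

lemma diag_sq (M : Matrix (Fin n) (Fin n) (ZMod 2)) (hM : Mᵀ = M) (i : Fin n) :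
    (M *ᵥ fun _ => (1 : ZMod 2)) i = (M * M) i i := by
  have hv : ∀ k, M k i = M i k := by
    intro k
    nth_rewrite 1 [← hM]
    rw [Matrix.transpose_apply]
  simp only [Matrix.mulVec, Matrix.mul_apply, dotProduct]
  refine Finset.sum_congr rfl fun j _ => ?_
  rw [hv j, mul_one, z2_mul_self]

/-- The core mod-2 argument. -/
lemma main2 (S : Matrix (Fin n) (Fin n) (ZMod 2)) (hs : Sᵀ = S) (hd : ∀ i, S i i = 0)
    (c' : ℕ → ZMod 2)
    (hCH : ∑ i ∈ Finset.range (n + 1), c' i • S ^ (n - i) = 0) (k : Fin n) :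
    ((∑ j ∈ Finset.range (n / 2 + 1), c' (2 * j) • S ^ ((n - 2 * j + 1) / 2)) *ᵥ
      fun _ => (1 : ZMod 2)) k = 0 := by
  -- even/odd split of Cayley–Hamilton
  have hsplit : (∑ i ∈ (Finset.range (n + 1)).filter (fun i => Even i), c' i • S ^ (n - i))
      + (∑ i ∈ (Finset.range (n + 1)).filter (fun i => ¬ Even i), c' i • S ^ (n - i)) = 0 := by
    rw [Finset.sum_filter_add_sum_filter_not]
    exact hCH
  have hEfilter : (∑ j ∈ Finset.range (n / 2 + 1), c' (2 * j) • S ^ (n - 2 * j))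
      = ∑ i ∈ (Finset.range (n + 1)).filter (fun i => Even i), c' i • S ^ (n - i) := by
    refine Finset.sum_nbij' (fun j => 2 * j) (fun i => i / 2) ?_ ?_ ?_ ?_ ?_
    · intro j hj
      simp only [Finset.mem_range] at hj
      simp only [Finset.mem_filter, Finset.mem_range]
      exact ⟨by omega, ⟨j, by omega⟩⟩
    · intro i hi
      simp only [Finset.mem_filter, Finset.mem_range] at hi
      simp only [Finset.mem_range]
      omega
    · intro j _; show 2 * j / 2 = j; omega
    · intro i hi
      simp only [Finset.mem_filter, Finset.mem_range] at hi
      obtain ⟨_, m, hm⟩ := hi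
      show 2 * (i / 2) = i
      omega
    · intro j _; rfl
  have hEO : (∑ j ∈ Finset.range (n / 2 + 1), c' (2 * j) • S ^ (n - 2 * j))
      = ∑ i ∈ (Finset.range (n + 1)).filter (fun i => ¬ Even i), c' i • S ^ (n - i) := by
    set O := ∑ i ∈ (Finset.range (n + 1)).filter (fun i => ¬ Even i), c' i • S ^ (n - i)
      with hO
    have hOO : O + O = 0 := by
      ext a b
      simp only [Matrix.add_apply, Matrix.zero_apply]
      exact z2_add_self _
    calc (∑ j ∈ Finset.range (n / 2 + 1), c' (2 * j) • S ^ (n - 2 * j))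
        = (∑ j ∈ Finset.range (n / 2 + 1), c' (2 * j) • S ^ (n - 2 * j)) + (O + O) := by
          rw [hOO, add_zero]
      _ = ((∑ j ∈ Finset.range (n / 2 + 1), c' (2 * j) • S ^ (n - 2 * j)) + O) + O := by
          rw [add_assoc]
      _ = O := by rw [hEfilter, hsplit, zero_add]
  -- the half-degree matrix as a polynomial in S
  set M' : Matrix (Fin n) (Fin n) (ZMod 2) :=
    ∑ j ∈ Finset.range (n / 2 + 1), c' (2 * j) • S ^ ((n - 2 * j + 1) / 2) with hM'
  set q : Polynomial (ZMod 2) :=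
    ∑ j ∈ Finset.range (n / 2 + 1), C (c' (2 * j)) * X ^ ((n - 2 * j + 1) / 2) with hq
  have haq : ∀ (Y : Matrix (Fin n) (Fin n) (ZMod 2)),
      aeval Y q = ∑ j ∈ Finset.range (n / 2 + 1), c' (2 * j) • Y ^ ((n - 2 * j + 1) / 2) := by
    intro Y
    rw [hq, map_sum]
    refine Finset.sum_congr rfl fun j _ => ?_
    rw [_root_.map_mul, aeval_C, map_pow, aeval_X, Algebra.smul_def]
  have hsq : M' * M' = aeval (S ^ 2) q := by
    have h2 : q * q = expand (ZMod 2) 2 q := by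
      have h3 := Polynomial.map_frobenius_expand 2 q
      rw [ZMod.frobenius_zmod, Polynomial.map_id] at h3
      rw [h3, sq]
    rw [hM', ← haq S, ← _root_.map_mul, h2, Polynomial.expand_aeval]
  have hsq2 : M' * M' = S ^ (n % 2) *
      ∑ j ∈ Finset.range (n / 2 + 1), c' (2 * j) • S ^ (n - 2 * j) := by
    rw [hsq, haq (S ^ 2), Finset.mul_sum]
    refine Finset.sum_congr rfl fun j hj => ?_
    simp only [Finset.mem_range] at hj
    rw [← pow_mul, Matrix.mul_smul, ← pow_add]
    have he : 2 * ((n - 2 * j + 1) / 2) = n % 2 + (n - 2 * j) := by omega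
    rw [he]
  have hdiag0 : (M' * M') k k = 0 := by
    rw [hsq2, hEO, Finset.mul_sum, Matrix.sum_apply]
    apply Finset.sum_eq_zero
    intro i hi
    simp only [Finset.mem_filter, Finset.mem_range] at hi
    rw [Matrix.mul_smul, Matrix.smul_apply, ← pow_add]
    have hodd : ∃ m, n % 2 + (n - i) = 2 * m + 1 := by
      rcases hi with ⟨hin, hie⟩
      rw [Nat.not_even_iff] at hie
      exact ⟨(n % 2 + (n - i)) / 2, by omega⟩
    obtain ⟨m, hm⟩ := hodd
    rw [hm, diag_odd_pow S hs hd m k, smul_zero]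
  have hM's : M'ᵀ = M' := by
    rw [hM', Matrix.transpose_sum]
    refine Finset.sum_congr rfl fun j _ => ?_
    rw [Matrix.transpose_smul, pow_symm S hs]
  rw [diag_sq M' hM's k, hdiag0]

lemma mapPow (A : Matrix (Fin n) (Fin n) ℤ) (m : ℕ) (i j : Fin n) :
    ((A.map (fun x : ℤ => (x : ZMod 2))) ^ m) i j = (((A ^ m) i j : ℤ) : ZMod 2) := by
  have h : A.map (fun x : ℤ => (x : ZMod 2)) = (Int.castRingHom (ZMod 2)).mapMatrix A := rfl
  rw [h, ← map_pow]
  rfl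

theorem main (A : Matrix (Fin n) (Fin n) ℤ) (hs : Aᵀ = A) (hd : ∀ i, A i i = 0) (k : Fin n) :
    (2 : ℤ) ∣ ((Mhalf A fun i => A.charpoly.coeff (n - i)) *ᵥ fun _ => (1 : ℤ)) k := by
  -- Cayley–Hamilton over ℤ, reindexed
  have hCHZ : ∑ i ∈ Finset.range (n + 1),
      A.charpoly.coeff (n - i) • A ^ (n - i) = 0 := by
    have h1 := Matrix.aeval_self_charpoly A
    have hdeg : A.charpoly.natDegree < n + 1 := by
      rw [Matrix.charpoly_natDegree_eq_dim]
      simp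
    rw [aeval_eq_sum_range' hdeg] at h1
    have h2 := Finset.sum_range_reflect (fun i => A.charpoly.coeff i • A ^ i) (n + 1)
    simp only [Nat.add_sub_cancel] at h2
    rw [h2]
    exact h1
  -- mod 2 version
  have hS : (A.map (fun x : ℤ => (x : ZMod 2)))ᵀ = A.map (fun x : ℤ => (x : ZMod 2)) := by
    ext i j
    rw [Matrix.transpose_apply, Matrix.map_apply, Matrix.map_apply]
    nth_rewrite 1 [← hs]
    rw [Matrix.transpose_apply]
  have hD : ∀ i, (A.map (fun x : ℤ => (x : ZMod 2))) i i = 0 := by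
    intro i
    rw [Matrix.map_apply, hd]
    simp
  have hCH : ∑ i ∈ Finset.range (n + 1),
      (fun i => ((A.charpoly.coeff (n - i) : ℤ) : ZMod 2)) i •
        (A.map (fun x : ℤ => (x : ZMod 2))) ^ (n - i) = 0 := by
    ext a b
    have h1 := congrArg (fun M => M a b) hCHZ
    simp only [Matrix.sum_apply, Matrix.smul_apply, Matrix.zero_apply, smul_eq_mul] at h1 ⊢
    have h3 : ∀ i, ((A.charpoly.coeff (n - i) : ℤ) : ZMod 2) *
        ((A.map (fun x : ℤ => (x : ZMod 2))) ^ (n - i)) a b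
        = (((A.charpoly.coeff (n - i) * (A ^ (n - i)) a b : ℤ)) : ZMod 2) := by
      intro i
      rw [mapPow]
      push_cast
      ring
    rw [Finset.sum_congr rfl fun i _ => h3 i, ← Int.cast_sum, h1, Int.cast_zero]
  have hmain := main2 (A.map (fun x : ℤ => (x : ZMod 2))) hS hD
    (fun i => ((A.charpoly.coeff (n - i) : ℤ) : ZMod 2)) hCH k
  have hz : ((((Mhalf A fun i => A.charpoly.coeff (n - i)) *ᵥ fun _ => (1 : ℤ)) k : ℤ) : ZMod 2)
      = ((∑ j ∈ Finset.range (n / 2 + 1),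
          ((A.charpoly.coeff (n - 2 * j) : ℤ) : ZMod 2) •
            (A.map (fun x : ℤ => (x : ZMod 2))) ^ ((n - 2 * j + 1) / 2)) *ᵥ
          fun _ => (1 : ZMod 2)) k := by
    simp only [Mhalf, Matrix.mulVec, dotProduct, Matrix.sum_apply, Matrix.smul_apply,
      smul_eq_mul, mul_one]
    push_cast
    refine Finset.sum_congr rfl fun b _ => Finset.sum_congr rfl fun j _ => ?_
    rw [mapPow]
  have hfin : ((((Mhalf A fun i => A.charpoly.coeff (n - i)) *ᵥ fun _ => (1 : ℤ)) k : ℤ)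
      : ZMod 2) = 0 := by
    rw [hz]
    exact hmain
  have := (ZMod.intCast_zmod_eq_zero_iff_dvd
    (((Mhalf A fun i => A.charpoly.coeff (n - i)) *ᵥ fun _ => (1 : ℤ)) k) 2).mp hfin
  exact_mod_cast this

end Stmt19Aux

/-- Corollary 4: for generalized cospectral graphs `G` and `H` with common
characteristic polynomial, the matrices `M(G)` and `M(H)`, built from the even-indexed
coefficients of the common characteristic polynomial, satisfy `M(G)e ≡ 0 (mod 2)` and
`M(H)e ≡ 0 (mod 2)`. -/
theorem stmt19 (n : ℕ) (G H : SimpleGraph (Fin n)) (hGH : genCospectral G H) :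
    (∀ k, (2 : ℤ) ∣
      ((Mhalf (adjMat n G) (fun i => (adjMat n G).charpoly.coeff (n - i))) *ᵥ
        fun _ => (1 : ℤ)) k) ∧
    (∀ k, (2 : ℤ) ∣
      ((Mhalf (adjMat n H) (fun i => (adjMat n G).charpoly.coeff (n - i))) *ᵥ
        fun _ => (1 : ℤ)) k) := by
  have hsym : ∀ (G' : SimpleGraph (Fin n)), (adjMat n G')ᵀ = adjMat n G' := by
    intro G'; ext i j
    simp [adjMat, SimpleGraph.adj_comm]
  have hdiag : ∀ (G' : SimpleGraph (Fin n)) i, adjMat n G' i i = 0 := by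
    intro G' i; simp [adjMat]
  constructor
  · intro k
    exact Stmt19Aux.main (adjMat n G) (hsym G) (hdiag G) k
  · intro k
    rw [hGH.1]
    exact Stmt19Aux.main (adjMat n H) (hsym H) (hdiag H) k
end
end
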